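/- arXiv:1902.04952 — 7 statements merged into one kernel-verified Lean document; each statement's English description precedes it below -/
import Mathlib

section
/- Let H be a d×d symmetric positive definite real matrix with condition number κ = σ_max(H)/σ_min(H), let w* ∈ ℝ^d, and let ε ∈ (0, 1/4). Consider the quadratic objective with constant Hessian H and minimizer w*, so that the gradient at any point w is g(w) = H(w − w*). Suppose for each iteration t a symmetric positive definite matrix H̃_t satisfies (1−ε)H ⪯ H̃_t ⪯ (1+ε)H, and the iterates are updated by w_{t+1} = w_t − H̃_t⁻¹ g(w_t). Then for every t ≥ 0, ‖w_t − w*‖₂ ≤ (√2·ε)^t · √κ · ‖w_0 − w*‖₂. -/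
open Matrix

noncomputable section

/-- The Euclidean (ℓ2) norm of a vector in `ℝ^d`. -/
def norm2 {d : ℕ} (x : Fin d → ℝ) : ℝ := Real.sqrt (x ⬝ᵥ x)

/-- The smallest eigenvalue of a Hermitian matrix. -/
def sMin {d : ℕ} {H : Matrix (Fin d) (Fin d) ℝ} (hH : H.IsHermitian) : ℝ :=
  ⨅ i, hH.eigenvalues i

/-- The largest eigenvalue of a Hermitian matrix. -/
def sMax {d : ℕ} {H : Matrix (Fin d) (Fin d) ℝ} (hH : H.IsHermitian) : ℝ :=
  ⨆ i, hH.eigenvalues i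

namespace SSNAux
variable {d : ℕ}

lemma dotPSD {M : Matrix (Fin d) (Fin d) ℝ} (hM : M.PosSemidef) (x : Fin d → ℝ) :
    0 ≤ x ⬝ᵥ (M *ᵥ x) := by simpa using hM.dotProduct_mulVec_nonneg x

lemma basis_dot_one {A : Matrix (Fin d) (Fin d) ℝ} (hA : A.IsHermitian) (i : Fin d) :
    (⇑(hA.eigenvectorBasis i) : Fin d → ℝ) ⬝ᵥ ⇑(hA.eigenvectorBasis i) = 1 := by
  have h := hA.eigenvectorBasis.orthonormal.1 i
  have h2 : (inner ℝ (hA.eigenvectorBasis i) (hA.eigenvectorBasis i) : ℝ) = 1 := by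
    rw [real_inner_self_eq_norm_mul_norm, h]; ring
  rw [EuclideanSpace.inner_eq_star_dotProduct] at h2
  simpa using h2

lemma basis_ne_zero {A : Matrix (Fin d) (Fin d) ℝ} (hA : A.IsHermitian) (i : Fin d) :
    (⇑(hA.eigenvectorBasis i) : Fin d → ℝ) ≠ 0 := by
  have h := hA.eigenvectorBasis.orthonormal.ne_zero i
  intro h0; apply h; ext j; exact congrFun h0 j

lemma spectral_real {A : Matrix (Fin d) (Fin d) ℝ} (hA : A.IsHermitian) :
    A = (hA.eigenvectorUnitary : Matrix (Fin d) (Fin d) ℝ) * diagonal hA.eigenvalues *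
      star (hA.eigenvectorUnitary : Matrix (Fin d) (Fin d) ℝ) := by
  simpa using hA.spectral_theorem

lemma conjPSD {A : Matrix (Fin d) (Fin d) ℝ} (hA : A.IsHermitian)
    {B : Matrix (Fin d) (Fin d) ℝ} {g : Fin d → ℝ} (hg : ∀ i, 0 ≤ g i)
    (hB : B = (hA.eigenvectorUnitary : Matrix (Fin d) (Fin d) ℝ) * diagonal g *
      star (hA.eigenvectorUnitary : Matrix (Fin d) (Fin d) ℝ)) : B.PosSemidef := by
  rw [hB, Matrix.star_eq_conjTranspose]
  exact (Matrix.PosSemidef.diagonal hg).mul_mul_conjTranspose_same _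

lemma smul_one_rep {A : Matrix (Fin d) (Fin d) ℝ} (hA : A.IsHermitian) (c : ℝ) :
    c • (1 : Matrix (Fin d) (Fin d) ℝ) =
      (hA.eigenvectorUnitary : Matrix (Fin d) (Fin d) ℝ) * diagonal (fun _ => c) *
        star (hA.eigenvectorUnitary : Matrix (Fin d) (Fin d) ℝ) := by
  have hd : (diagonal (fun _ : Fin d => c) : Matrix (Fin d) (Fin d) ℝ) = c • 1 := by
    ext i j
    by_cases h : i = j <;> simp [Matrix.diagonal_apply, Matrix.one_apply, h]
  rw [hd, Matrix.mul_smul, Matrix.smul_mul, mul_one,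
    (Matrix.mem_unitaryGroup_iff).mp hA.eigenvectorUnitary.2]

lemma psd_smul_one_sub {A : Matrix (Fin d) (Fin d) ℝ} (hA : A.IsHermitian) {c : ℝ}
    (h : ∀ i, hA.eigenvalues i ≤ c) : (c • (1 : Matrix (Fin d) (Fin d) ℝ) - A).PosSemidef := by
  refine conjPSD hA (g := fun i => c - hA.eigenvalues i)
    (fun i => by linarith [h i]) ?_
  have hg : (diagonal (fun i => c - hA.eigenvalues i) : Matrix (Fin d) (Fin d) ℝ)
      = diagonal (fun _ => c) - diagonal hA.eigenvalues := by rw [← Matrix.diagonal_sub]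
  rw [hg, Matrix.mul_sub, Matrix.sub_mul, ← smul_one_rep hA c, ← spectral_real hA]

lemma psd_sub_smul_one {A : Matrix (Fin d) (Fin d) ℝ} (hA : A.IsHermitian) {c : ℝ}
    (h : ∀ i, c ≤ hA.eigenvalues i) : (A - c • (1 : Matrix (Fin d) (Fin d) ℝ)).PosSemidef := by
  refine conjPSD hA (g := fun i => hA.eigenvalues i - c)
    (fun i => by linarith [h i]) ?_
  have hg : (diagonal (fun i => hA.eigenvalues i - c) : Matrix (Fin d) (Fin d) ℝ)
      = diagonal hA.eigenvalues - diagonal (fun _ => c) := by rw [← Matrix.diagonal_sub]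
  rw [hg, Matrix.mul_sub, Matrix.sub_mul, ← smul_one_rep hA c, ← spectral_real hA]

lemma sq_rep {A : Matrix (Fin d) (Fin d) ℝ} (hA : A.IsHermitian) :
    A * A = (hA.eigenvectorUnitary : Matrix (Fin d) (Fin d) ℝ) *
      diagonal (fun i => (hA.eigenvalues i) ^ 2) *
      star (hA.eigenvectorUnitary : Matrix (Fin d) (Fin d) ℝ) := by
  calc A * A = ((hA.eigenvectorUnitary : Matrix (Fin d) (Fin d) ℝ) * diagonal hA.eigenvalues *
        star (hA.eigenvectorUnitary : Matrix (Fin d) (Fin d) ℝ)) *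
      ((hA.eigenvectorUnitary : Matrix (Fin d) (Fin d) ℝ) * diagonal hA.eigenvalues *
        star (hA.eigenvectorUnitary : Matrix (Fin d) (Fin d) ℝ)) := by
        rw [← spectral_real hA]
    _ = (hA.eigenvectorUnitary : Matrix (Fin d) (Fin d) ℝ) *
        (diagonal hA.eigenvalues * ((star (hA.eigenvectorUnitary : Matrix (Fin d) (Fin d) ℝ)) *
          (hA.eigenvectorUnitary : Matrix (Fin d) (Fin d) ℝ)) * diagonal hA.eigenvalues) *
        star (hA.eigenvectorUnitary : Matrix (Fin d) (Fin d) ℝ) := by noncomm_ring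
    _ = (hA.eigenvectorUnitary : Matrix (Fin d) (Fin d) ℝ) *
        diagonal (fun i => (hA.eigenvalues i) ^ 2) *
        star (hA.eigenvectorUnitary : Matrix (Fin d) (Fin d) ℝ) := by
        rw [(Matrix.mem_unitaryGroup_iff').mp hA.eigenvectorUnitary.2, mul_one,
          Matrix.diagonal_mul_diagonal]
        congr 2; funext i; ring

lemma psd_sq_bound {A : Matrix (Fin d) (Fin d) ℝ} (hA : A.IsHermitian) {c : ℝ}
    (h : ∀ i, (hA.eigenvalues i) ^ 2 ≤ c) :
    (c • (1 : Matrix (Fin d) (Fin d) ℝ) - A * A).PosSemidef := by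
  refine conjPSD hA (g := fun i => c - (hA.eigenvalues i) ^ 2)
    (fun i => by linarith [h i]) ?_
  have hg : (diagonal (fun i => c - (hA.eigenvalues i) ^ 2) : Matrix (Fin d) (Fin d) ℝ)
      = diagonal (fun _ => c) - diagonal (fun i => (hA.eigenvalues i) ^ 2) := by
    rw [← Matrix.diagonal_sub]
  rw [hg, Matrix.mul_sub, Matrix.sub_mul, ← smul_one_rep hA c, ← sq_rep hA]

lemma hermDot {A : Matrix (Fin d) (Fin d) ℝ} (hA : A.IsHermitian) (x : Fin d → ℝ) :
    (A *ᵥ x) ⬝ᵥ (A *ᵥ x) = x ⬝ᵥ ((A * A) *ᵥ x) := by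
  have hAt : Aᵀ = A := by rw [← Matrix.conjTranspose_eq_transpose_of_trivial, hA.eq]
  calc (A *ᵥ x) ⬝ᵥ (A *ᵥ x) = (x ᵥ* Aᵀ) ⬝ᵥ (A *ᵥ x) := by rw [Matrix.vecMul_transpose]
    _ = x ⬝ᵥ (A *ᵥ (A *ᵥ x)) := by rw [hAt, ← Matrix.dotProduct_mulVec]
    _ = x ⬝ᵥ ((A * A) *ᵥ x) := by rw [Matrix.mulVec_mulVec]


lemma contract {D : Matrix (Fin d) (Fin d) ℝ} (hDH : D.IsHermitian) (hdet : IsUnit D.det)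
    {ε : ℝ} (hε0 : 0 < ε) (hε1 : ε < 1 / 4)
    (h1 : (D - (1 - ε) • 1).PosSemidef) (h2 : ((1 + ε) • 1 - D).PosSemidef) :
    ((2 * ε ^ 2) • (1 : Matrix (Fin d) (Fin d) ℝ) - (1 - D⁻¹) * (1 - D⁻¹)).PosSemidef := by
  have hInv : (D⁻¹).IsHermitian := hDH.inv
  have hA : (1 - D⁻¹ : Matrix (Fin d) (Fin d) ℝ).IsHermitian := (isHermitian_one).sub hInv
  refine psd_sq_bound hA fun i => ?_
  set v : Fin d → ℝ := ⇑(hA.eigenvectorBasis i) with hv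
  set μ : ℝ := hA.eigenvalues i with hμ
  have hv1 : v ⬝ᵥ v = 1 := basis_dot_one hA i
  have hvne : v ≠ 0 := basis_ne_zero hA i
  have hmv : (1 - D⁻¹) *ᵥ v = μ • v := hA.mulVec_eigenvectorBasis i
  have hinvv : D⁻¹ *ᵥ v = (1 - μ) • v := by
    have h' : v - D⁻¹ *ᵥ v = μ • v := by
      rw [← hmv, Matrix.sub_mulVec, Matrix.one_mulVec]
    funext j
    have := congrFun h' j
    simp only [Pi.sub_apply, Pi.smul_apply, smul_eq_mul] at this ⊢
    linarith
  have hDD : D * D⁻¹ = 1 := Matrix.mul_nonsing_inv _ hdet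
  have hveq : v = (1 - μ) • (D *ᵥ v) := by
    calc v = (D * D⁻¹) *ᵥ v := by rw [hDD, Matrix.one_mulVec]
      _ = D *ᵥ (D⁻¹ *ᵥ v) := by rw [Matrix.mulVec_mulVec]
      _ = D *ᵥ ((1 - μ) • v) := by rw [hinvv]
      _ = (1 - μ) • (D *ᵥ v) := by rw [Matrix.mulVec_smul]
  have hne : (1 : ℝ) - μ ≠ 0 := by
    intro h0
    rw [h0, zero_smul] at hveq
    exact hvne hveq
  have hDv : D *ᵥ v = (1 - μ)⁻¹ • v := by
    conv_rhs => rw [hveq]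
    rw [smul_smul, inv_mul_cancel₀ hne, one_smul]
  have hvDv : v ⬝ᵥ (D *ᵥ v) = (1 - μ)⁻¹ := by
    rw [hDv, dotProduct_smul, hv1, smul_eq_mul, mul_one]
  have q1 : (1 : ℝ) - ε ≤ (1 - μ)⁻¹ := by
    have := dotPSD h1 v
    rw [Matrix.sub_mulVec, dotProduct_sub, hvDv, Matrix.smul_mulVec,
      Matrix.one_mulVec, dotProduct_smul, hv1, smul_eq_mul, mul_one] at this
    linarith
  have q2 : (1 - μ)⁻¹ ≤ 1 + ε := by
    have := dotPSD h2 v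
    rw [Matrix.sub_mulVec, dotProduct_sub, hvDv, Matrix.smul_mulVec,
      Matrix.one_mulVec, dotProduct_smul, hv1, smul_eq_mul, mul_one] at this
    linarith
  have hmul : (1 - μ) * (1 - μ)⁻¹ = 1 := mul_inv_cancel₀ hne
  have hpos : 0 < 1 - μ := by
    rcases lt_or_gt_of_ne hne with h | h
    · exfalso
      have : (1 - μ)⁻¹ < 0 := inv_lt_zero.mpr (by linarith)
      linarith
    · linarith
  have h3 : (1 - μ) * (1 - ε) ≤ 1 := by
    calc (1 - μ) * (1 - ε) ≤ (1 - μ) * (1 - μ)⁻¹ :=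
          mul_le_mul_of_nonneg_left q1 hpos.le
      _ = 1 := hmul
  have h4 : (1 : ℝ) ≤ (1 - μ) * (1 + ε) := by
    calc (1 : ℝ) = (1 - μ) * (1 - μ)⁻¹ := hmul.symm
      _ ≤ (1 - μ) * (1 + ε) := mul_le_mul_of_nonneg_left q2 hpos.le
  nlinarith [sq_nonneg (μ + ε), sq_nonneg (μ - ε), sq_nonneg μ, sq_nonneg ε,
    mul_pos hε0 hε0, sq_nonneg (μ * ε), sq_nonneg (1 - μ)]

open scoped MatrixOrder

set_option maxHeartbeats 2000000 in
theorem main_thm {d : ℕ}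
    (H : Matrix (Fin d) (Fin d) ℝ) (hH : H.PosDef)
    (wstar : Fin d → ℝ) (ε : ℝ) (hε : 0 < ε ∧ ε < 1 / 4)
    (Htil : ℕ → Matrix (Fin d) (Fin d) ℝ)
    (hHtilPD : ∀ t, (Htil t).PosDef)
    (happrox : ∀ t, (Htil t - (1 - ε) • H).PosSemidef ∧ ((1 + ε) • H - Htil t).PosSemidef)
    (w : ℕ → Fin d → ℝ)
    (hupdate : ∀ t, w (t + 1) = w t - (Htil t)⁻¹ *ᵥ (H *ᵥ (w t - wstar))) :
    ∀ t, Real.sqrt ((w t - wstar) ⬝ᵥ (w t - wstar)) ≤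
      (Real.sqrt 2 * ε) ^ t *
        Real.sqrt ((⨆ i, hH.1.eigenvalues i) / (⨅ i, hH.1.eigenvalues i)) *
        Real.sqrt ((w 0 - wstar) ⬝ᵥ (w 0 - wstar)) := by
  obtain ⟨hε0, hε1⟩ := hε
  rcases Nat.eq_zero_or_pos d with hd0 | hd0
  · subst hd0
    intro t
    simp [dotProduct]
  haveI : Nonempty (Fin d) := Fin.pos_iff_nonempty.mp hd0
  set S := CFC.sqrt H with hSdef
  have hSpsd : S.PosSemidef := (CFC.sqrt_nonneg H).posSemidef
  have hSH : S.IsHermitian := hSpsd.1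
  have hSS : S * S = H := CFC.sqrt_mul_sqrt_self H hH.posSemidef.nonneg
  have hdetH : IsUnit H.det := hH.det_pos.ne'.isUnit
  have hdetS : IsUnit S.det := by
    have hm : S.det * S.det = H.det := by rw [← Matrix.det_mul, hSS]
    exact isUnit_of_mul_isUnit_left (hm ▸ hdetH)
  have hS1 : S * S⁻¹ = 1 := Matrix.mul_nonsing_inv _ hdetS
  have hS1' : S⁻¹ * S = 1 := Matrix.nonsing_inv_mul _ hdetS
  have hSinvH : (S⁻¹).IsHermitian := hSH.inv
  have hdetSi : IsUnit (S⁻¹).det := by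
    have h9 : (S⁻¹).det * S.det = 1 := by
      rw [← Matrix.det_mul, hS1', Matrix.det_one]
    exact IsUnit.of_mul_eq_one _ h9
  set e : ℕ → (Fin d → ℝ) := fun t => w t - wstar with he
  set z : ℕ → (Fin d → ℝ) := fun t => S *ᵥ e t with hz
  have hSHS : S⁻¹ * H * S⁻¹ = 1 := by
    rw [← hSS,
      show S⁻¹ * (S * S) * S⁻¹ = (S⁻¹ * S) * (S * S⁻¹) from by noncomm_ring, hS1', hS1, one_mul]
  have key : ∀ t, z (t + 1) ⬝ᵥ z (t + 1) ≤ (2 * ε ^ 2) * (z t ⬝ᵥ z t) := by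
    intro t
    set B := (Htil t)⁻¹ with hB
    set D := S⁻¹ * Htil t * S⁻¹ with hD
    have hHtH : (Htil t).IsHermitian := (hHtilPD t).1
    have hDH : D.IsHermitian := by
      have h10 := Matrix.isHermitian_conjTranspose_mul_mul S⁻¹ hHtH
      rwa [hSinvH.eq] at h10
    have hdetHt : IsUnit (Htil t).det := (hHtilPD t).det_pos.ne'.isUnit
    have hdetD : IsUnit D.det := by
      rw [hD, Matrix.det_mul, Matrix.det_mul]
      exact (hdetSi.mul hdetHt).mul hdetSi
    have hDinv : D⁻¹ = S * B * S := by
      rw [hD, Matrix.mul_inv_rev, Matrix.mul_inv_rev,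
        Matrix.nonsing_inv_nonsing_inv _ hdetS, hB]
      noncomm_ring
    have hb1 : (D - (1 - ε) • 1).PosSemidef := by
      have hps := (happrox t).1.mul_mul_conjTranspose_same S⁻¹
      rw [hSinvH.eq] at hps
      have h11 : S⁻¹ * (Htil t - (1 - ε) • H) * S⁻¹ = D - (1 - ε) • 1 := by
        rw [Matrix.mul_sub, Matrix.sub_mul, hD]
        congr 1
        rw [Matrix.mul_smul, Matrix.smul_mul, hSHS]
      rwa [h11] at hps
    have hb2 : ((1 + ε) • 1 - D).PosSemidef := by
      have hps := (happrox t).2.mul_mul_conjTranspose_same S⁻¹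
      rw [hSinvH.eq] at hps
      have h11 : S⁻¹ * ((1 + ε) • H - Htil t) * S⁻¹ = (1 + ε) • 1 - D := by
        rw [Matrix.mul_sub, Matrix.sub_mul, hD]
        congr 1
        rw [Matrix.mul_smul, Matrix.smul_mul, hSHS]
      rwa [h11] at hps
    have hK := contract hDH hdetD hε0 hε1 hb1 hb2
    have hAH : (1 - D⁻¹ : Matrix (Fin d) (Fin d) ℝ).IsHermitian :=
      isHermitian_one.sub hDH.inv
    have het : e (t + 1) = e t - B *ᵥ (H *ᵥ e t) := by
      funext j
      have h12 := congrFun (hupdate t) j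
      simp only [he, Pi.sub_apply] at h12 ⊢
      rw [h12]; ring
    have hLR : S *ᵥ (B *ᵥ (H *ᵥ e t)) = (S * B * S) *ᵥ (S *ᵥ e t) := by
      rw [Matrix.mulVec_mulVec, Matrix.mulVec_mulVec, Matrix.mulVec_mulVec, ← hSS,
        ← Matrix.mul_assoc]
    have hz1 : z (t + 1) = S *ᵥ e (t + 1) := rfl
    have hz0 : z t = S *ᵥ e t := rfl
    have hrec : z (t + 1) = (1 - D⁻¹) *ᵥ z t := by
      rw [hDinv, hz1, hz0, het, Matrix.mulVec_sub, Matrix.sub_mulVec, Matrix.one_mulVec, hLR]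
    rw [hrec, hermDot hAH]
    have h0 := dotPSD hK (z t)
    rw [Matrix.sub_mulVec, dotProduct_sub, Matrix.smul_mulVec, Matrix.one_mulVec,
      dotProduct_smul, smul_eq_mul] at h0
    linarith
  have hiter : ∀ t, z t ⬝ᵥ z t ≤ (2 * ε ^ 2) ^ t * (z 0 ⬝ᵥ z 0) := by
    intro t
    induction t with
    | zero => simp
    | succ n ih =>
      calc z (n + 1) ⬝ᵥ z (n + 1) ≤ (2 * ε ^ 2) * (z n ⬝ᵥ z n) := key n
        _ ≤ (2 * ε ^ 2) * ((2 * ε ^ 2) ^ n * (z 0 ⬝ᵥ z 0)) :=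
            mul_le_mul_of_nonneg_left ih (by positivity)
        _ = (2 * ε ^ 2) ^ (n + 1) * (z 0 ⬝ᵥ z 0) := by ring
  have hzz : ∀ t, z t ⬝ᵥ z t = e t ⬝ᵥ (H *ᵥ e t) := by
    intro t
    have hz0 : z t = S *ᵥ e t := rfl
    rw [hz0, hermDot hSH, hSS]
  set m := ⨅ i, hH.1.eigenvalues i with hm
  set M := ⨆ i, hH.1.eigenvalues i with hM
  have hm_le : ∀ i, m ≤ hH.1.eigenvalues i := fun i => ciInf_le (Finite.bddBelow_range _) i
  have hle_M : ∀ i, hH.1.eigenvalues i ≤ M := fun i => le_ciSup (Finite.bddAbove_range _) i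
  have hmpos : 0 < m := by
    obtain ⟨i, hi⟩ := exists_eq_ciInf_of_finite (f := hH.1.eigenvalues)
    rw [hm, ← hi]
    exact hH.eigenvalues_pos i
  have hlow : (H - m • 1).PosSemidef := psd_sub_smul_one hH.1 hm_le
  have hhigh : (M • 1 - H).PosSemidef := psd_smul_one_sub hH.1 hle_M
  have hlowq : ∀ t, m * (e t ⬝ᵥ e t) ≤ z t ⬝ᵥ z t := by
    intro t
    have h0 := dotPSD hlow (e t)
    rw [Matrix.sub_mulVec, dotProduct_sub, Matrix.smul_mulVec, Matrix.one_mulVec,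
      dotProduct_smul, smul_eq_mul] at h0
    rw [hzz t]; linarith
  have hhighq : z 0 ⬝ᵥ z 0 ≤ M * (e 0 ⬝ᵥ e 0) := by
    have h0 := dotPSD hhigh (e 0)
    rw [Matrix.sub_mulVec, dotProduct_sub, Matrix.smul_mulVec, Matrix.one_mulVec,
      dotProduct_smul, smul_eq_mul] at h0
    rw [hzz 0]; linarith
  intro t
  have hfin : e t ⬝ᵥ e t ≤ (2 * ε ^ 2) ^ t * (M / m) * (e 0 ⬝ᵥ e 0) := by
    have c1 : m * (e t ⬝ᵥ e t) ≤ (2 * ε ^ 2) ^ t * (M * (e 0 ⬝ᵥ e 0)) :=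
      le_trans (le_trans (hlowq t) (hiter t))
        (mul_le_mul_of_nonneg_left hhighq (by positivity))
    have h2 : ((2 * ε ^ 2) ^ t * (M / m) * (e 0 ⬝ᵥ e 0)) * m
        = (2 * ε ^ 2) ^ t * (M * (e 0 ⬝ᵥ e 0)) := by
      field_simp
    have h3 : e t ⬝ᵥ e t = m * (e t ⬝ᵥ e t) / m := by
      field_simp
    rw [h3, div_le_iff₀ hmpos, h2]
    exact c1
  have hsq : (Real.sqrt 2 * ε) ^ 2 = 2 * ε ^ 2 := by
    rw [mul_pow, Real.sq_sqrt (by norm_num : (0:ℝ) ≤ 2)]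
  have hsqrt2 : Real.sqrt ((2 * ε ^ 2) ^ t) = (Real.sqrt 2 * ε) ^ t := by
    calc Real.sqrt ((2 * ε ^ 2) ^ t) = Real.sqrt (((Real.sqrt 2 * ε) ^ 2) ^ t) := by rw [hsq]
      _ = Real.sqrt (((Real.sqrt 2 * ε) ^ t) ^ 2) := by
          rw [← pow_mul, ← pow_mul, mul_comm 2 t]
      _ = (Real.sqrt 2 * ε) ^ t := Real.sqrt_sq (by positivity)
  have hMpos : 0 < M :=
    lt_of_lt_of_le hmpos (le_trans (hm_le (Classical.arbitrary _)) (hle_M (Classical.arbitrary _)))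
  calc Real.sqrt ((w t - wstar) ⬝ᵥ (w t - wstar)) = Real.sqrt (e t ⬝ᵥ e t) := rfl
    _ ≤ Real.sqrt ((2 * ε ^ 2) ^ t * (M / m) * (e 0 ⬝ᵥ e 0)) := Real.sqrt_le_sqrt hfin
    _ = Real.sqrt ((2 * ε ^ 2) ^ t) * Real.sqrt (M / m) * Real.sqrt (e 0 ⬝ᵥ e 0) := by
        rw [Real.sqrt_mul (mul_nonneg (by positivity) (div_pos hMpos hmpos).le),
          Real.sqrt_mul (by positivity : (0:ℝ) ≤ (2 * ε ^ 2) ^ t)]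
    _ = (Real.sqrt 2 * ε) ^ t * Real.sqrt (M / m) *
          Real.sqrt ((w 0 - wstar) ⬝ᵥ (w 0 - wstar)) := by rw [hsqrt2]
end SSNAux


/-- global convergence of subsampled Newton for a quadratic objective with
constant Hessian `H` and minimizer `wstar`. -/
theorem ssn_global_convergence_quadratic {d : ℕ}
    (H : Matrix (Fin d) (Fin d) ℝ) (hH : H.PosDef)
    (wstar : Fin d → ℝ) (ε : ℝ) (hε : 0 < ε ∧ ε < 1 / 4)
    (Htil : ℕ → Matrix (Fin d) (Fin d) ℝ)
    (hHtilPD : ∀ t, (Htil t).PosDef)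
    (happrox : ∀ t, (Htil t - (1 - ε) • H).PosSemidef ∧ ((1 + ε) • H - Htil t).PosSemidef)
    (w : ℕ → Fin d → ℝ)
    (hupdate : ∀ t, w (t + 1) = w t - (Htil t)⁻¹ *ᵥ (H *ᵥ (w t - wstar))) :
    ∀ t, norm2 (w t - wstar) ≤
      (Real.sqrt 2 * ε) ^ t * Real.sqrt (sMax hH.1 / sMin hH.1) * norm2 (w 0 - wstar) := by
  intro t
  simp only [norm2, sMax, sMin]
  exact SSNAux.main_thm H hH wstar ε hε Htil hHtilPD happrox w hupdate t
end
end

section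
/- Let F : ℝ^d → ℝ be twice continuously differentiable with a minimizer w*, and suppose its Hessian ∇²F is L-Lipschitz in spectral norm: ‖∇²F(w) − ∇²F(w′)‖₂ ≤ L‖w − w′‖₂ for all w, w′. Fix an iterate w_t, let H_t = ∇²F(w_t) be symmetric positive definite with condition number κ_t = σ_max(H_t)/σ_min(H_t), and let ε ∈ (0, 1/4). Suppose a symmetric positive definite matrix H̃_t satisfies (1−ε)H_t ⪯ H̃_t ⪯ (1+ε)H_t and set w_{t+1} = w_t − H̃_t⁻¹ ∇F(w_t). Then ‖w_{t+1} − w*‖₂ ≤ √2·ε·√κ_t·‖w_t − w*‖₂ + (L/σ_min(H_t))·‖w_t − w*‖₂². -/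
open Matrix

noncomputable section

section SSNAux
open RealInnerProductSpace

variable {d : ℕ}

lemma ssn_inner_tEL (M : Matrix (Fin d) (Fin d) ℝ) (x y : EuclideanSpace ℝ (Fin d)) :
    ⟪x, Matrix.toEuclideanLin M y⟫ = (x : Fin d → ℝ) ⬝ᵥ (M *ᵥ (y : Fin d → ℝ)) := by
  rw [toEuclideanLin_apply]
  simp [PiLp.inner_apply, dotProduct, mulVec, Finset.mul_sum]
  refine Finset.sum_congr rfl fun i _ => ?_
  rw [Finset.sum_mul]
  exact Finset.sum_congr rfl fun j _ => by ring

lemma ssn_psd_nonneg {M : Matrix (Fin d) (Fin d) ℝ} (hM : M.PosSemidef)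
    (x : EuclideanSpace ℝ (Fin d)) : 0 ≤ ⟪x, Matrix.toEuclideanLin M x⟫ := by
  rw [ssn_inner_tEL]; simpa using hM.dotProduct_mulVec_nonneg (x : Fin d → ℝ)

lemma ssn_symm {M : Matrix (Fin d) (Fin d) ℝ} (hM : M.IsHermitian)
    (x y : EuclideanSpace ℝ (Fin d)) :
    ⟪x, Matrix.toEuclideanLin M y⟫ = ⟪y, Matrix.toEuclideanLin M x⟫ := by
  rw [ssn_inner_tEL, ssn_inner_tEL, Matrix.dotProduct_mulVec, ← Matrix.mulVec_transpose]
  have hMt : Mᵀ = M := by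
    have h2 := hM
    rwa [Matrix.IsHermitian, conjTranspose_eq_transpose_of_trivial] at h2
  rw [hMt, dotProduct_comm]

lemma ssn_smul_one (c : ℝ) (x : EuclideanSpace ℝ (Fin d)) :
    Matrix.toEuclideanLin (c • (1 : Matrix (Fin d) (Fin d) ℝ)) x = c • x := by
  rw [_root_.map_smul, LinearMap.smul_apply]
  congr 1
  rw [toEuclideanLin_apply]
  simp

lemma ssn_mul (A B : Matrix (Fin d) (Fin d) ℝ) (x : EuclideanSpace ℝ (Fin d)) :
    Matrix.toEuclideanLin A (Matrix.toEuclideanLin B x) = Matrix.toEuclideanLin (A * B) x := by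
  simp [toEuclideanLin_apply, mulVec_mulVec]

lemma ssn_diag_conj (H : Matrix (Fin d) (Fin d) ℝ) (hH : H.IsHermitian) (a b : ℝ) :
    a • H + b • 1 = (hH.eigenvectorUnitary : Matrix (Fin d) (Fin d) ℝ) *
      diagonal (fun i => a * hH.eigenvalues i + b) *
      (star (hH.eigenvectorUnitary : Matrix (Fin d) (Fin d) ℝ)) := by
  have hU : (hH.eigenvectorUnitary : Matrix (Fin d) (Fin d) ℝ) *
      (star (hH.eigenvectorUnitary : Matrix (Fin d) (Fin d) ℝ)) = 1 :=
    (Matrix.mem_unitaryGroup_iff).mp hH.eigenvectorUnitary.2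
  have hd : diagonal (fun i => a * hH.eigenvalues i + b)
      = a • diagonal (RCLike.ofReal ∘ hH.eigenvalues) + b • (1 : Matrix (Fin d) (Fin d) ℝ) := by
    ext i j
    by_cases h : i = j <;> simp [diagonal_apply, one_apply, h, mul_comm]
  rw [hd, Matrix.mul_add, Matrix.add_mul]
  congr 1
  · rw [Matrix.mul_smul, Matrix.smul_mul]
    exact congrArg _ hH.spectral_theorem
  · rw [Matrix.mul_smul, Matrix.mul_one, Matrix.smul_mul, hU]

lemma ssn_lower_psd (H : Matrix (Fin d) (Fin d) ℝ) (hH : H.IsHermitian) [Nonempty (Fin d)] :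
    (H - sMin hH • 1).PosSemidef := by
  have h : H - sMin hH • 1 = (1:ℝ) • H + (-(sMin hH)) • 1 := by
    simp [sub_eq_add_neg, neg_smul]
  rw [h, ssn_diag_conj H hH]
  exact (posSemidef_diagonal_iff.mpr fun i => by
    have := ciInf_le (Set.Finite.bddBelow (Set.finite_range hH.eigenvalues)) i
    simp only [one_mul]
    rw [sMin] at *
    linarith).mul_mul_conjTranspose_same _

lemma ssn_upper_psd (H : Matrix (Fin d) (Fin d) ℝ) (hH : H.IsHermitian) [Nonempty (Fin d)] :
    (sMax hH • 1 - H).PosSemidef := by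
  have h : sMax hH • (1 : Matrix (Fin d) (Fin d) ℝ) - H
      = (-1:ℝ) • H + sMax hH • 1 := by
    simp [sub_eq_add_neg, neg_smul, add_comm]
  rw [h, ssn_diag_conj H hH]
  exact (posSemidef_diagonal_iff.mpr fun i => by
    have := le_ciSup (Set.Finite.bddAbove (Set.finite_range hH.eigenvalues)) i
    simp only [neg_one_mul]
    rw [sMax] at *
    linarith).mul_mul_conjTranspose_same _

lemma ssn_lower (H : Matrix (Fin d) (Fin d) ℝ) (hH : H.IsHermitian) [Nonempty (Fin d)]
    (x : EuclideanSpace ℝ (Fin d)) :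
    sMin hH * ‖x‖ ^ 2 ≤ ⟪x, Matrix.toEuclideanLin H x⟫ := by
  have h := ssn_psd_nonneg (ssn_lower_psd H hH) x
  rw [_root_.map_sub, LinearMap.sub_apply, inner_sub_right, ssn_smul_one,
    real_inner_smul_right, real_inner_self_eq_norm_sq] at h
  linarith

lemma ssn_upper (H : Matrix (Fin d) (Fin d) ℝ) (hH : H.IsHermitian) [Nonempty (Fin d)]
    (x : EuclideanSpace ℝ (Fin d)) :
    ⟪x, Matrix.toEuclideanLin H x⟫ ≤ sMax hH * ‖x‖ ^ 2 := by
  have h := ssn_psd_nonneg (ssn_upper_psd H hH) x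
  rw [_root_.map_sub, LinearMap.sub_apply, inner_sub_right, ssn_smul_one,
    real_inner_smul_right, real_inner_self_eq_norm_sq] at h
  linarith

/-- Generalized Cauchy–Schwarz for a symmetric bilinear form dominated by a positive
definite quadratic form. -/
lemma ssn_gcs {H E : Matrix (Fin d) (Fin d) ℝ} (hH : H.PosDef) (hE : E.IsHermitian)
    {ε : ℝ} (hε : 0 ≤ ε)
    (hbound : ∀ x : EuclideanSpace ℝ (Fin d),
      |⟪x, Matrix.toEuclideanLin E x⟫| ≤ ε * ⟪x, Matrix.toEuclideanLin H x⟫)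
    (x y : EuclideanSpace ℝ (Fin d)) :
    ⟪x, Matrix.toEuclideanLin E y⟫ ≤
      ε * Real.sqrt ⟪x, Matrix.toEuclideanLin H x⟫ *
        Real.sqrt ⟪y, Matrix.toEuclideanLin H y⟫ := by
  -- base inequality
  have base : ∀ u v : EuclideanSpace ℝ (Fin d),
      ⟪u, Matrix.toEuclideanLin E v⟫ ≤
        ε * (⟪u, Matrix.toEuclideanLin H u⟫ + ⟪v, Matrix.toEuclideanLin H v⟫) / 2 := by
    intro u v
    have hsym := ssn_symm hE u v
    have e1 : ⟪u + v, Matrix.toEuclideanLin E (u + v)⟫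
        = ⟪u, Matrix.toEuclideanLin E u⟫ + 2 * ⟪u, Matrix.toEuclideanLin E v⟫
          + ⟪v, Matrix.toEuclideanLin E v⟫ := by
      rw [map_add, inner_add_left, inner_add_right, inner_add_right, ← hsym]; ring
    have e2 : ⟪u - v, Matrix.toEuclideanLin E (u - v)⟫
        = ⟪u, Matrix.toEuclideanLin E u⟫ - 2 * ⟪u, Matrix.toEuclideanLin E v⟫
          + ⟪v, Matrix.toEuclideanLin E v⟫ := by
      rw [map_sub, inner_sub_left, inner_sub_right, inner_sub_right, ← hsym]; ring
    have f1 : ⟪u + v, Matrix.toEuclideanLin H (u + v)⟫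
        = ⟪u, Matrix.toEuclideanLin H u⟫ + 2 * ⟪u, Matrix.toEuclideanLin H v⟫
          + ⟪v, Matrix.toEuclideanLin H v⟫ := by
      rw [map_add, inner_add_left, inner_add_right, inner_add_right, ← ssn_symm hH.1 u v]; ring
    have f2 : ⟪u - v, Matrix.toEuclideanLin H (u - v)⟫
        = ⟪u, Matrix.toEuclideanLin H u⟫ - 2 * ⟪u, Matrix.toEuclideanLin H v⟫
          + ⟪v, Matrix.toEuclideanLin H v⟫ := by
      rw [map_sub, inner_sub_left, inner_sub_right, inner_sub_right, ← ssn_symm hH.1 u v]; ring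
    have h1 := (abs_le.mp (hbound (u + v))).2
    have h2 := (abs_le.mp (hbound (u - v))).1
    rw [e1, f1] at h1
    rw [e2, f2] at h2
    nlinarith [h1, h2]
  by_cases hx : x = 0
  · subst hx
    simp only [inner_zero_left]
    positivity
  by_cases hy : y = 0
  · subst hy
    rw [map_zero, inner_zero_right]
    positivity
  have hQx : 0 < ⟪x, Matrix.toEuclideanLin H x⟫ := by
    have := hH.dotProduct_mulVec_pos (x := (x : Fin d → ℝ)) (fun h => hx (by ext i; exact congrFun h i))
    rw [ssn_inner_tEL]
    simpa using this
  have hQy : 0 < ⟪y, Matrix.toEuclideanLin H y⟫ := by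
    have := hH.dotProduct_mulVec_pos (x := (y : Fin d → ℝ)) (fun h => hy (by ext i; exact congrFun h i))
    rw [ssn_inner_tEL]
    simpa using this
  set a := Real.sqrt ⟪x, Matrix.toEuclideanLin H x⟫ with ha
  set b := Real.sqrt ⟪y, Matrix.toEuclideanLin H y⟫ with hb
  have ha2 : a ^ 2 = ⟪x, Matrix.toEuclideanLin H x⟫ := Real.sq_sqrt hQx.le
  have hb2 : b ^ 2 = ⟪y, Matrix.toEuclideanLin H y⟫ := Real.sq_sqrt hQy.le
  have hapos : 0 < a := Real.sqrt_pos.mpr hQx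
  have hbpos : 0 < b := Real.sqrt_pos.mpr hQy
  set t := Real.sqrt (b / a) with ht
  have htpos : 0 < t := Real.sqrt_pos.mpr (by positivity)
  have ht2 : t ^ 2 = b / a := Real.sq_sqrt (by positivity)
  have key := base (t • x) (t⁻¹ • y)
  rw [_root_.map_smul, real_inner_smul_left, real_inner_smul_right,
    _root_.map_smul, real_inner_smul_left, real_inner_smul_right,
    _root_.map_smul, real_inner_smul_left, real_inner_smul_right] at key
  have h1 : t * (t⁻¹ * ⟪x, Matrix.toEuclideanLin E y⟫) = ⟪x, Matrix.toEuclideanLin E y⟫ := by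
    field_simp
  rw [h1] at key
  have h2 : t * (t * ⟪x, Matrix.toEuclideanLin H x⟫) = a * b := by
    rw [← ha2, ← mul_assoc, ← sq, ht2]
    field_simp
  have h3 : t⁻¹ * (t⁻¹ * ⟪y, Matrix.toEuclideanLin H y⟫) = a * b := by
    rw [← hb2, ← mul_assoc, ← sq, inv_pow, ht2]
    field_simp
  rw [h2, h3] at key
  calc ⟪x, Matrix.toEuclideanLin E y⟫ ≤ ε * (a * b + a * b) / 2 := key
    _ = ε * a * b := by ring

/-- Pure real arithmetic: the bound on the first error term. -/
lemma ssn_ubound {σm σM nu nn p q ε : ℝ} (hσm : 0 < σm) (hσM : 0 < σM)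
    (hε0 : 0 < ε) (hε14 : ε < 1/4) (hnu : 0 ≤ nu) (hnn : 0 ≤ nn)
    (hp : 0 ≤ p) (hq : 0 ≤ q)
    (hpq : (1 - ε) * p ≤ ε * q) (hσmu : σm * nu ^ 2 ≤ p ^ 2) (hqn : q ^ 2 ≤ σM * nn ^ 2) :
    nu ≤ Real.sqrt 2 * ε * Real.sqrt (σM / σm) * nn := by
  have hκ : (0:ℝ) ≤ σM / σm := by positivity
  have hB0 : 0 ≤ Real.sqrt 2 * ε * Real.sqrt (σM / σm) * nn := by positivity
  have hsq1 : (1 - ε) ^ 2 * p ^ 2 ≤ ε ^ 2 * q ^ 2 := by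
    nlinarith [mul_le_mul hpq hpq (by nlinarith : (0:ℝ) ≤ (1 - ε) * p)
      (mul_nonneg hε0.le hq)]
  have h1e : (0:ℝ) ≤ (1 - ε) ^ 2 - 9/16 := by nlinarith
  have h916 : (9:ℝ)/16 * p ^ 2 ≤ (1 - ε) ^ 2 * p ^ 2 := by
    nlinarith [mul_nonneg h1e (sq_nonneg p)]
  have hp169 : p ^ 2 ≤ 16/9 * (ε ^ 2 * q ^ 2) := by nlinarith
  have hq3 : ε ^ 2 * q ^ 2 ≤ ε ^ 2 * (σM * nn ^ 2) :=
    mul_le_mul_of_nonneg_left hqn (sq_nonneg ε)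
  have hεσ : 0 ≤ ε ^ 2 * (σM * nn ^ 2) := by positivity
  have hukey : σm * nu ^ 2 ≤ 2 * ε ^ 2 * σM * nn ^ 2 := by nlinarith
  have hsq : nu ^ 2 ≤ (Real.sqrt 2 * ε * Real.sqrt (σM / σm) * nn) ^ 2 := by
    have hrhs : (Real.sqrt 2 * ε * Real.sqrt (σM / σm) * nn) ^ 2
        = 2 * ε ^ 2 * (σM / σm) * nn ^ 2 := by
      rw [mul_pow, mul_pow, mul_pow, Real.sq_sqrt (by norm_num : (0:ℝ) ≤ 2), Real.sq_sqrt hκ]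
    have hfrac : 2 * ε ^ 2 * (σM / σm) * nn ^ 2 = (2 * ε ^ 2 * σM * nn ^ 2) / σm := by
      field_simp
    rw [hrhs, hfrac, le_div_iff₀ hσm, mul_comm]
    exact hukey
  calc nu = Real.sqrt (nu ^ 2) := (Real.sqrt_sq hnu).symm
    _ ≤ Real.sqrt ((Real.sqrt 2 * ε * Real.sqrt (σM / σm) * nn) ^ 2) := Real.sqrt_le_sqrt hsq
    _ = Real.sqrt 2 * ε * Real.sqrt (σM / σm) * nn := Real.sqrt_sq hB0

/-- Pure real arithmetic: the bound on the second error term. -/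
lemma ssn_vbound {σm L nn R nv ε : ℝ} (hσm : 0 < σm) (hε0 : 0 < ε) (hε14 : ε < 1/4)
    (hL : 0 ≤ L) (hnn : 0 ≤ nn) (hR0 : 0 ≤ R)
    (hv : nv ≤ R / ((1 - ε) * σm)) (hR : R ≤ L * nn * nn / 2) :
    nv ≤ (L / σm) * nn ^ 2 := by
  have hpos : 0 < (1 - ε) * σm := by nlinarith
  have h1 : R / ((1 - ε) * σm) ≤ (L * nn * nn / 2) / ((1 - ε) * σm) :=
    (div_le_div_iff_of_pos_right hpos).mpr hR
  have h2 : (L * nn * nn / 2) / ((1 - ε) * σm) ≤ (L / σm) * nn ^ 2 := by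
    rw [div_le_iff₀ hpos, div_mul_eq_mul_div, div_mul_eq_mul_div, le_div_iff₀ hσm]
    nlinarith [mul_nonneg (mul_nonneg (mul_nonneg hL hnn) hnn) hσm.le, hε0, hε14]
  linarith

end SSNAux

open RealInnerProductSpace

set_option maxHeartbeats 2000000 in
/-- local convergence of one subsampled-Newton step for a twice continuously
differentiable objective `F` with `L`-Lipschitz Hessian (in spectral norm, stated pointwise). -/
theorem ssn_local_convergence {d : ℕ}
    (F : EuclideanSpace ℝ (Fin d) → ℝ) (hF : ContDiff ℝ 2 F)
    (wstar : EuclideanSpace ℝ (Fin d)) (hmin : ∀ w, F wstar ≤ F w)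
    (L : ℝ)
    (Hess : EuclideanSpace ℝ (Fin d) → Matrix (Fin d) (Fin d) ℝ)
    (hHess : ∀ w y, fderiv ℝ (gradient F) w y = Matrix.toEuclideanLin (Hess w) y)
    (hLip : ∀ w w' x, ‖Matrix.toEuclideanLin (Hess w - Hess w') x‖ ≤ L * ‖w - w'‖ * ‖x‖)
    (wt : EuclideanSpace ℝ (Fin d)) (hHt : (Hess wt).PosDef)
    (ε : ℝ) (hε : 0 < ε ∧ ε < 1 / 4)
    (Htil : Matrix (Fin d) (Fin d) ℝ) (hHtil : Htil.PosDef)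
    (happrox : (Htil - (1 - ε) • Hess wt).PosSemidef ∧ ((1 + ε) • Hess wt - Htil).PosSemidef)
    (wnext : EuclideanSpace ℝ (Fin d))
    (hupdate : wnext = wt - Matrix.toEuclideanLin Htil⁻¹ (gradient F wt)) :
    ‖wnext - wstar‖ ≤
      Real.sqrt 2 * ε * Real.sqrt (sMax hHt.1 / sMin hHt.1) * ‖wt - wstar‖
        + (L / sMin hHt.1) * ‖wt - wstar‖ ^ 2 := by
  obtain ⟨hε0, hε14⟩ := hε
  rcases Nat.eq_zero_or_pos d with hd | hd
  · subst hd
    have h1 : ‖wnext - wstar‖ = 0 := by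
      simp [EuclideanSpace.norm_eq]
    have h2 : ‖wt - wstar‖ = 0 := by
      simp [EuclideanSpace.norm_eq]
    rw [h1, h2]
    simp
  haveI : Nonempty (Fin d) := ⟨⟨0, hd⟩⟩
  -- positivity of extreme eigenvalues
  have hbb : BddBelow (Set.range hHt.1.eigenvalues) :=
    Set.Finite.bddBelow (Set.finite_range _)
  have hba : BddAbove (Set.range hHt.1.eigenvalues) :=
    Set.Finite.bddAbove (Set.finite_range _)
  have hσm_pos : 0 < sMin hHt.1 := by
    obtain ⟨i0, hi0⟩ := Finite.exists_min hHt.1.eigenvalues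
    exact lt_of_lt_of_le (hHt.eigenvalues_pos i0) (le_ciInf hi0)
  have hσMm : sMin hHt.1 ≤ sMax hHt.1 :=
    le_trans (ciInf_le hbb (Classical.arbitrary _)) (le_ciSup hba _)
  have hσM_pos : 0 < sMax hHt.1 := lt_of_lt_of_le hσm_pos hσMm
  have hκ : (0:ℝ) ≤ sMax hHt.1 / sMin hHt.1 := by positivity
  -- L is nonnegative
  have hL0 : 0 ≤ L := by
    set x : EuclideanSpace ℝ (Fin d) := EuclideanSpace.single (Classical.arbitrary _) (1:ℝ)
    have hx : ‖x‖ = 1 := by simp [x, EuclideanSpace.norm_single]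
    have h := hLip x 0 x
    rw [sub_zero, hx] at h
    nlinarith [norm_nonneg (Matrix.toEuclideanLin (Hess x - Hess 0) x)]
  set Δ : EuclideanSpace ℝ (Fin d) := wt - wstar with hΔ
  set n := ‖Δ‖ with hn
  have hn0 : 0 ≤ n := norm_nonneg _
  set g := gradient F with hg_def
  -- gradient vanishes at the minimizer
  have hgstar : g wstar = 0 := by
    have hl : IsLocalMin F wstar := Filter.Eventually.of_forall hmin
    rw [hg_def, gradient, hl.fderiv_eq_zero, map_zero]
  -- gradient is C¹
  have hg1 : ContDiff ℝ 1 g := by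
    have h1 : ContDiff ℝ 1 (fderiv ℝ F) := hF.fderiv_right (by norm_num)
    have h2 : g = fun x => (InnerProductSpace.toDual ℝ _).symm (fderiv ℝ F x) := rfl
    rw [h2]
    exact (InnerProductSpace.toDual ℝ _).symm.contDiff.comp h1
  -- the path from wstar to wt
  set c : ℝ → EuclideanSpace ℝ (Fin d) := fun s => wstar + s • Δ with hc
  have hcd : ∀ s : ℝ, HasDerivAt c Δ s := by
    intro s
    have h := ((hasDerivAt_id s).smul_const Δ).const_add wstar
    rw [one_smul] at h
    exact h
  have hγ : ∀ s : ℝ, HasDerivAt (fun s => g (c s)) ((fderiv ℝ g (c s)) Δ) s := fun s =>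
    ((hg1.differentiable one_ne_zero (c s)).hasFDerivAt).comp_hasDerivAt s (hcd s)
  have hcont : Continuous fun s => (fderiv ℝ g (c s)) Δ := by
    have h1 : Continuous (fderiv ℝ g) := hg1.continuous_fderiv one_ne_zero
    have h2 : Continuous c := by continuity
    exact (h1.comp h2).clm_apply continuous_const
  have hc1 : c 1 = wt := by
    rw [hc]; simp [hΔ]
  have hc0 : c 0 = wstar := by rw [hc]; simp
  -- fundamental theorem of calculus
  have hgwt : g wt = ∫ s in (0:ℝ)..1, (fderiv ℝ g (c s)) Δ := by
    have h := intervalIntegral.integral_eq_sub_of_hasDerivAt (a := 0) (b := 1)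
      (fun t _ => hγ t) (hcont.intervalIntegrable 0 1)
    rw [hc1, hc0, hgstar, sub_zero] at h
    exact h.symm
  set X := Matrix.toEuclideanLin (Hess wt) Δ with hX
  set r := g wt - X with hr
  -- the integral form of the remainder
  have hr_int : r = ∫ s in (0:ℝ)..1, ((fderiv ℝ g (c s)) Δ - X) := by
    rw [intervalIntegral.integral_sub (hcont.intervalIntegrable 0 1)
      intervalIntegrable_const, intervalIntegral.integral_const, ← hgwt]
    rw [hr]
    norm_num
  -- bound on the remainder
  have hr_norm : ‖r‖ ≤ L * n * n / 2 := by
    rw [hr_int]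
    have h1 : ‖∫ s in (0:ℝ)..1, ((fderiv ℝ g (c s)) Δ - X)‖
        ≤ ∫ s in (0:ℝ)..1, ‖(fderiv ℝ g (c s)) Δ - X‖ :=
      intervalIntegral.norm_integral_le_integral_norm (by norm_num)
    have h2 : ∫ s in (0:ℝ)..1, ‖(fderiv ℝ g (c s)) Δ - X‖
        ≤ ∫ s in (0:ℝ)..1, (L * n * n * (1 - s)) := by
      apply intervalIntegral.integral_mono_on (by norm_num)
      · exact ((hcont.sub continuous_const).norm).intervalIntegrable 0 1
      · exact ((continuous_const.mul ((continuous_const.sub continuous_id))).intervalIntegrable 0 1)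
      · intro s hs
        have hdiff : (fderiv ℝ g (c s)) Δ - X
            = Matrix.toEuclideanLin (Hess (c s) - Hess wt) Δ := by
          have hms : Matrix.toEuclideanLin (Hess (c s) - Hess wt) Δ
              = Matrix.toEuclideanLin (Hess (c s)) Δ - Matrix.toEuclideanLin (Hess wt) Δ := by
            rw [show Matrix.toEuclideanLin (Hess (c s) - Hess wt)
                = Matrix.toEuclideanLin (Hess (c s)) - Matrix.toEuclideanLin (Hess wt) from
              _root_.map_sub _ _ _, LinearMap.sub_apply]
          rw [hms, hHess (c s) Δ, hX]
        rw [hdiff]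
        have h3 := hLip (c s) wt Δ
        have h4 : c s - wt = (s - 1) • Δ := by
          rw [hc]
          simp only []
          rw [sub_smul, one_smul, hΔ]
          abel
        have h5 : ‖c s - wt‖ = (1 - s) * n := by
          rw [h4, norm_smul, Real.norm_eq_abs, abs_of_nonpos (by linarith [hs.2])]
          rw [hn]; ring
        calc ‖Matrix.toEuclideanLin (Hess (c s) - Hess wt) Δ‖
            ≤ L * ‖c s - wt‖ * ‖Δ‖ := h3
          _ = L * n * n * (1 - s) := by rw [h5, ← hn]; ring
    have h6 : ∫ s in (0:ℝ)..1, (L * n * n * (1 - s)) = L * n * n / 2 := by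
      rw [intervalIntegral.integral_const_mul,
        intervalIntegral.integral_sub intervalIntegrable_const
          intervalIntegral.intervalIntegrable_id,
        integral_id]
      norm_num [intervalIntegral.integral_const]
      ring
    linarith
  -- invertibility of Htil
  have hone : ∀ x : EuclideanSpace ℝ (Fin d), Matrix.toEuclideanLin (1 : Matrix (Fin d) (Fin d) ℝ) x = x := by
    intro x
    have := ssn_smul_one (1:ℝ) x
    simpa using this
  have hInv : ∀ v, Matrix.toEuclideanLin Htil (Matrix.toEuclideanLin Htil⁻¹ v) = v := by
    intro v
    rw [ssn_mul, Matrix.mul_nonsing_inv _ (isUnit_iff_ne_zero.mpr hHtil.det_pos.ne'), hone]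
  -- quadratic form bounds from the spectral approximation
  have hlow : ∀ x : EuclideanSpace ℝ (Fin d),
      (1 - ε) * ⟪x, Matrix.toEuclideanLin (Hess wt) x⟫ ≤ ⟪x, Matrix.toEuclideanLin Htil x⟫ := by
    intro x
    have h := ssn_psd_nonneg happrox.1 x
    rw [_root_.map_sub, LinearMap.sub_apply, inner_sub_right, _root_.map_smul,
      LinearMap.smul_apply, real_inner_smul_right] at h
    linarith
  have hupp : ∀ x : EuclideanSpace ℝ (Fin d),
      ⟪x, Matrix.toEuclideanLin Htil x⟫ ≤ (1 + ε) * ⟪x, Matrix.toEuclideanLin (Hess wt) x⟫ := by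
    intro x
    have h := ssn_psd_nonneg happrox.2 x
    rw [_root_.map_sub, LinearMap.sub_apply, inner_sub_right, _root_.map_smul,
      LinearMap.smul_apply, real_inner_smul_right] at h
    linarith
  have hEherm : (Htil - Hess wt).IsHermitian := hHtil.1.sub hHt.1
  have hEbound : ∀ x : EuclideanSpace ℝ (Fin d),
      |⟪x, Matrix.toEuclideanLin (Htil - Hess wt) x⟫|
        ≤ ε * ⟪x, Matrix.toEuclideanLin (Hess wt) x⟫ := by
    intro x
    have hsub : ⟪x, Matrix.toEuclideanLin (Htil - Hess wt) x⟫
        = ⟪x, Matrix.toEuclideanLin Htil x⟫ - ⟪x, Matrix.toEuclideanLin (Hess wt) x⟫ := by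
      rw [_root_.map_sub, LinearMap.sub_apply, inner_sub_right]
    rw [abs_le, hsub]
    exact ⟨by linarith [hlow x], by linarith [hupp x]⟩
  -- the two pieces of the error
  set u : EuclideanSpace ℝ (Fin d) := Δ - Matrix.toEuclideanLin Htil⁻¹ X with hu
  set v : EuclideanSpace ℝ (Fin d) := Matrix.toEuclideanLin Htil⁻¹ r with hv
  have hsplit : wnext - wstar = u - v := by
    have hgX : g wt = X + r := by rw [hr]; abel
    rw [hupdate, hu, hv, hgX, _root_.map_add, hΔ]
    abel
  -- bound on v
  have hvXtil : ⟪v, Matrix.toEuclideanLin Htil v⟫ = ⟪v, r⟫ := by rw [hv, hInv r]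
  have hv_norm : ‖v‖ ≤ ‖r‖ / ((1 - ε) * sMin hHt.1) := by
    have hlv := ssn_lower (Hess wt) hHt.1 v
    have h1 := hlow v
    have h2 : ⟪v, r⟫ ≤ ‖v‖ * ‖r‖ := real_inner_le_norm v r
    have hpos : 0 < (1 - ε) * sMin hHt.1 := by nlinarith
    rw [le_div_iff₀ hpos]
    rcases eq_or_lt_of_le (norm_nonneg v) with hv0 | hv0
    · rw [← hv0]; simpa using norm_nonneg r
    · nlinarith [hvXtil, hlv, h1, h2]
  -- bound on u
  have hu0 : Matrix.toEuclideanLin Htil u = Matrix.toEuclideanLin (Htil - Hess wt) Δ := by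
    have hms : Matrix.toEuclideanLin (Htil - Hess wt) Δ
        = Matrix.toEuclideanLin Htil Δ - Matrix.toEuclideanLin (Hess wt) Δ := by
      rw [show Matrix.toEuclideanLin (Htil - Hess wt)
          = Matrix.toEuclideanLin Htil - Matrix.toEuclideanLin (Hess wt) from
        _root_.map_sub _ _ _, LinearMap.sub_apply]
    rw [hu, _root_.map_sub (Matrix.toEuclideanLin Htil), hInv X, hX, hms]
  have hQu_low : (1 - ε) * ⟪u, Matrix.toEuclideanLin (Hess wt) u⟫
      ≤ ⟪u, Matrix.toEuclideanLin (Htil - Hess wt) Δ⟫ := by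
    rw [← hu0]; exact hlow u
  have hCS := ssn_gcs hHt hEherm hε0.le hEbound u Δ
  set p := Real.sqrt ⟪u, Matrix.toEuclideanLin (Hess wt) u⟫ with hp
  set q := Real.sqrt ⟪Δ, Matrix.toEuclideanLin (Hess wt) Δ⟫ with hq
  have hQu_nonneg : 0 ≤ ⟪u, Matrix.toEuclideanLin (Hess wt) u⟫ := ssn_psd_nonneg hHt.posSemidef u
  have hQΔ_nonneg : 0 ≤ ⟪Δ, Matrix.toEuclideanLin (Hess wt) Δ⟫ := ssn_psd_nonneg hHt.posSemidef Δ
  have hp2 : p ^ 2 = ⟪u, Matrix.toEuclideanLin (Hess wt) u⟫ := Real.sq_sqrt hQu_nonneg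
  have hq2 : q ^ 2 = ⟪Δ, Matrix.toEuclideanLin (Hess wt) Δ⟫ := Real.sq_sqrt hQΔ_nonneg
  have hp_nonneg : 0 ≤ p := Real.sqrt_nonneg _
  have hq_nonneg : 0 ≤ q := Real.sqrt_nonneg _
  have hkey : (1 - ε) * p ^ 2 ≤ ε * p * q := by
    rw [hp2]
    calc (1 - ε) * ⟪u, Matrix.toEuclideanLin (Hess wt) u⟫
        ≤ ⟪u, Matrix.toEuclideanLin (Htil - Hess wt) Δ⟫ := hQu_low
      _ ≤ ε * p * q := hCS
  have hpq : (1 - ε) * p ≤ ε * q := by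
    rcases eq_or_lt_of_le hp_nonneg with hp0 | hp0
    · rw [← hp0]; nlinarith
    · nlinarith
  have hσmu : sMin hHt.1 * ‖u‖ ^ 2 ≤ p ^ 2 := by
    rw [hp2]; exact ssn_lower (Hess wt) hHt.1 u
  have hqn : q ^ 2 ≤ sMax hHt.1 * n ^ 2 := by
    rw [hq2, hn]; exact ssn_upper (Hess wt) hHt.1 Δ
  have hu_norm : ‖u‖ ≤ Real.sqrt 2 * ε * Real.sqrt (sMax hHt.1 / sMin hHt.1) * n :=
    ssn_ubound hσm_pos hσM_pos hε0 hε14 (norm_nonneg u) hn0 hp_nonneg hq_nonneg hpq hσmu hqn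
  -- bound the v term by the final quadratic term
  have hv_final : ‖v‖ ≤ (L / sMin hHt.1) * n ^ 2 :=
    ssn_vbound hσm_pos hε0 hε14 hL0 hn0 (norm_nonneg r) hv_norm hr_norm
  rw [hsplit]
  calc ‖u - v‖ ≤ ‖u‖ + ‖v‖ := norm_sub_le u v
    _ ≤ Real.sqrt 2 * ε * Real.sqrt (sMax hHt.1 / sMin hHt.1) * n
        + (L / sMin hHt.1) * n ^ 2 := add_le_add hu_norm hv_final
end
end

section
/- Let H be a d×d symmetric positive definite real matrix with condition number κ, let w* ∈ ℝ^d, and let ε ∈ (0, 1/2]. Consider the quadratic objective with constant Hessian H and minimizer w*, so the gradient at w is g(w) = H(w − w*). Suppose at each iteration t there are m symmetric positive definite matrices H̃_{t,1}, …, H̃_{t,m} such that (1−ε)H ⪯ H̃_{t,i} ⪯ (1+ε)H for every i ∈ [m] and (1/m)·Σ_{i=1}^m H̃_{t,i} = H, and the iterates are updated by w_{t+1} = w_t − (1/m)·Σ_{i=1}^m H̃_{t,i}⁻¹ g(w_t). Then for every t ≥ 0, ‖w_t − w*‖₂ ≤ (3ε²)^t · √κ · ‖w_0 − w*‖₂.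 -/
open Matrix

noncomputable section

namespace GiantAux
variable {d : ℕ}

lemma vecMul_eq_conj (U : Matrix (Fin d) (Fin d) ℝ) (v : Fin d → ℝ) :
    v ᵥ* U = Uᴴ *ᵥ v := by
  ext j; simp [vecMul, mulVec, dotProduct, conjTranspose_apply, mul_comm]

lemma dot_conj (U : Matrix (Fin d) (Fin d) ℝ) (f : Fin d → ℝ) (v : Fin d → ℝ) :
    v ⬝ᵥ ((U * diagonal f * Uᴴ) *ᵥ v) = ∑ j, f j * ((Uᴴ *ᵥ v) j)^2 := by
  rw [← mulVec_mulVec, ← mulVec_mulVec, dotProduct_mulVec, vecMul_eq_conj]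
  simp [dotProduct, mulVec_diagonal]
  exact Finset.sum_congr rfl fun j _ => by ring

/-- `(U *ᵥ w) ⬝ᵥ (U *ᵥ w) = w ⬝ᵥ w` when `Uᴴ * U = 1`. -/
lemma dot_mulVec_self (U : Matrix (Fin d) (Fin d) ℝ) (hU : Uᴴ * U = 1) (w : Fin d → ℝ) :
    (U *ᵥ w) ⬝ᵥ (U *ᵥ w) = w ⬝ᵥ w := by
  rw [dotProduct_mulVec, vecMul_eq_conj, mulVec_mulVec, hU, one_mulVec, dotProduct_comm]

lemma dot_self_conj (U : Matrix (Fin d) (Fin d) ℝ) (hU : U * Uᴴ = 1) (v : Fin d → ℝ) :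
    (Uᴴ *ᵥ v) ⬝ᵥ (Uᴴ *ᵥ v) = v ⬝ᵥ v := by
  have := dot_mulVec_self Uᴴ (by rw [conjTranspose_conjTranspose, hU]) v
  exact this

lemma norm2_eq_norm (x : Fin d → ℝ) :
    norm2 x = ‖(WithLp.equiv 2 (Fin d → ℝ)).symm x‖ := by
  rw [norm2, EuclideanSpace.norm_eq]
  congr 1
  simp [dotProduct, Real.norm_eq_abs, sq_abs, sq]

lemma norm2_nonneg (x : Fin d → ℝ) : 0 ≤ norm2 x := Real.sqrt_nonneg _

lemma norm2_neg (x : Fin d → ℝ) : norm2 (-x) = norm2 x := by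
  simp [norm2, dotProduct, neg_mul_neg]

lemma norm2_smul (c : ℝ) (x : Fin d → ℝ) : norm2 (c • x) = |c| * norm2 x := by
  rw [norm2_eq_norm, norm2_eq_norm]
  have : (WithLp.equiv 2 (Fin d → ℝ)).symm (c • x)
      = c • (WithLp.equiv 2 (Fin d → ℝ)).symm x := rfl
  rw [this, norm_smul, Real.norm_eq_abs]

lemma norm2_sum_le {ι : Type*} (s : Finset ι) (f : ι → Fin d → ℝ) :
    norm2 (∑ i ∈ s, f i) ≤ ∑ i ∈ s, norm2 (f i) := by
  simp only [norm2_eq_norm]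
  have : (WithLp.equiv 2 (Fin d → ℝ)).symm (∑ i ∈ s, f i)
      = ∑ i ∈ s, (WithLp.equiv 2 (Fin d → ℝ)).symm (f i) := by
    classical
    induction s using Finset.induction with
    | empty => rfl
    | insert _ _ h ih => rw [Finset.sum_insert h, Finset.sum_insert h, ← ih]; rfl
  rw [this]
  exact norm_sum_le _ _

/-- quadratic form lower bound from eigenvalue lower bound -/
lemma le_quad (U : Matrix (Fin d) (Fin d) ℝ) (hU2 : U * Uᴴ = 1)
    (f : Fin d → ℝ) (c : ℝ) (hf : ∀ j, c ≤ f j) (v : Fin d → ℝ) :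
    c * (v ⬝ᵥ v) ≤ v ⬝ᵥ ((U * diagonal f * Uᴴ) *ᵥ v) := by
  rw [dot_conj, ← dot_self_conj U hU2 v, dotProduct, Finset.mul_sum]
  exact Finset.sum_le_sum fun j _ => by
    have := sq_nonneg ((Uᴴ *ᵥ v) j); nlinarith [hf j]

lemma quad_le (U : Matrix (Fin d) (Fin d) ℝ) (hU2 : U * Uᴴ = 1)
    (f : Fin d → ℝ) (c : ℝ) (hf : ∀ j, f j ≤ c) (v : Fin d → ℝ) :
    v ⬝ᵥ ((U * diagonal f * Uᴴ) *ᵥ v) ≤ c * (v ⬝ᵥ v) := by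
  rw [dot_conj, ← dot_self_conj U hU2 v, dotProduct, Finset.mul_sum]
  exact Finset.sum_le_sum fun j _ => by
    have := sq_nonneg ((Uᴴ *ᵥ v) j); nlinarith [hf j]

/-- norm bound for a symmetric matrix given via orthogonal diagonalization -/
lemma norm2_conj_mulVec_le (U : Matrix (Fin d) (Fin d) ℝ)
    (hU1 : Uᴴ * U = 1) (hU2 : U * Uᴴ = 1)
    (f : Fin d → ℝ) (a : ℝ) (ha : 0 ≤ a) (hf : ∀ j, |f j| ≤ a) (v : Fin d → ℝ) :
    norm2 ((U * diagonal f * Uᴴ) *ᵥ v) ≤ a * norm2 v := by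
  have key : ((U * diagonal f * Uᴴ) *ᵥ v) ⬝ᵥ ((U * diagonal f * Uᴴ) *ᵥ v)
      ≤ a^2 * (v ⬝ᵥ v) := by
    have h1 : (U * diagonal f * Uᴴ) *ᵥ v = U *ᵥ (diagonal f *ᵥ (Uᴴ *ᵥ v)) := by
      rw [← mulVec_mulVec, ← mulVec_mulVec]
    rw [h1, dot_mulVec_self U hU1]
    have h2 : ∀ w : Fin d → ℝ, (diagonal f *ᵥ w) ⬝ᵥ (diagonal f *ᵥ w)
        = ∑ j, (f j)^2 * (w j)^2 := by
      intro w; simp [dotProduct, mulVec_diagonal]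
      exact Finset.sum_congr rfl fun j _ => by ring
    rw [h2, ← dot_self_conj U hU2 v, dotProduct, Finset.mul_sum]
    refine Finset.sum_le_sum fun j _ => ?_
    have h3 : (f j)^2 ≤ a^2 := sq_le_sq' (by linarith [abs_le.mp (hf j)] ) (abs_le.mp (hf j)).2
    nlinarith [sq_nonneg ((Uᴴ *ᵥ v) j)]
  calc norm2 ((U * diagonal f * Uᴴ) *ᵥ v) ≤ Real.sqrt (a^2 * (v ⬝ᵥ v)) :=
        Real.sqrt_le_sqrt key
    _ = a * norm2 v := by
        rw [Real.sqrt_mul (sq_nonneg a), Real.sqrt_sq ha]; rfl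

/-- eigenvalue lower bound from PSD -/
lemma eig_lb (A U : Matrix (Fin d) (Fin d) ℝ) (f : Fin d → ℝ)
    (hU1 : Uᴴ * U = 1) (hA : A = U * diagonal f * Uᴴ) (c : ℝ)
    (h : (A - c • (1 : Matrix (Fin d) (Fin d) ℝ)).PosSemidef) (j : Fin d) :
    c ≤ f j := by
  set x : Fin d → ℝ := U *ᵥ Pi.single j 1 with hx
  have h2 := h.dotProduct_mulVec_nonneg x
  have hUx : Uᴴ *ᵥ x = Pi.single j 1 := by
    rw [hx, mulVec_mulVec, hU1, one_mulVec]
  have hxx : x ⬝ᵥ x = 1 := by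
    rw [hx, dot_mulVec_self U hU1]; simp [dotProduct, Pi.single_apply]
  have hAx : x ⬝ᵥ (A *ᵥ x) = f j := by
    rw [hA, dot_conj, hUx]
    simp [Pi.single_apply]
  have hsx : star x = x := by simp
  rw [sub_mulVec, dotProduct_sub, hsx] at h2
  have : x ⬝ᵥ ((c • (1 : Matrix (Fin d) (Fin d) ℝ)) *ᵥ x) = c := by
    rw [smul_mulVec, one_mulVec, dotProduct_smul, hxx]; simp
  rw [hAx, this] at h2
  linarith

lemma eig_ub (A U : Matrix (Fin d) (Fin d) ℝ) (f : Fin d → ℝ)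
    (hU1 : Uᴴ * U = 1) (hA : A = U * diagonal f * Uᴴ) (c : ℝ)
    (h : (c • (1 : Matrix (Fin d) (Fin d) ℝ) - A).PosSemidef) (j : Fin d) :
    f j ≤ c := by
  have : ((-A) - (-c) • (1 : Matrix (Fin d) (Fin d) ℝ)).PosSemidef := by
    simpa [sub_eq_add_neg, add_comm] using h
  have h2 := eig_lb (-A) U (-f) hU1 (by rw [hA, show diagonal (-f) = -diagonal f from (diagonal_neg f).symm ▸ rfl, Matrix.mul_neg, Matrix.neg_mul]) (-c) this j
  simpa using h2

lemma sum_mulVec {ι : Type*} (s : Finset ι) (M : ι → Matrix (Fin d) (Fin d) ℝ)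
    (v : Fin d → ℝ) : (∑ i ∈ s, M i) *ᵥ v = ∑ i ∈ s, (M i) *ᵥ v := by
  ext j
  simp [mulVec, dotProduct, Finset.sum_apply, Finset.sum_mul, Matrix.sum_apply]
  rw [Finset.sum_comm]

lemma spectral_real (A : Matrix (Fin d) (Fin d) ℝ) (hA : A.IsHermitian) :
    ∃ (U : Matrix (Fin d) (Fin d) ℝ),
      Uᴴ * U = 1 ∧ U * Uᴴ = 1 ∧ A = U * diagonal hA.eigenvalues * Uᴴ := by
  refine ⟨hA.eigenvectorUnitary, ?_, ?_, ?_⟩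
  · exact (Matrix.mem_unitaryGroup_iff').mp (hA.eigenvectorUnitary).2
  · exact (Matrix.mem_unitaryGroup_iff).mp (hA.eigenvectorUnitary).2
  · have := hA.spectral_theorem
    simpa [star_eq_conjTranspose] using this

lemma local_bound {R Hm T : Matrix (Fin d) (Fin d) ℝ}
    (hRh : R.IsHermitian) (hRl : R⁻¹ * R = 1) (hRr : R * R⁻¹ = 1) (hRR : R * R = Hm)
    {ε : ℝ} (hε1 : 0 < ε) (hε2 : ε ≤ 1/2) (hT : T.PosDef)
    (h1 : (T - (1-ε) • Hm).PosSemidef) (h2 : ((1+ε) • Hm - T).PosSemidef) :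
    ∃ N : Matrix (Fin d) (Fin d) ℝ,
      R * T⁻¹ * R = 1 - (R⁻¹ * T * R⁻¹ - 1) + N ∧
      ∀ v, norm2 (N *ᵥ v) ≤ 3 * ε^2 * norm2 v := by
  have hRinvH : (R⁻¹)ᴴ = R⁻¹ := hRh.inv
  set B := R⁻¹ * T * R⁻¹ with hBdef
  have hBh : B.IsHermitian := by
    show Bᴴ = B
    rw [hBdef, conjTranspose_mul, conjTranspose_mul, hRinvH, hT.1.eq, Matrix.mul_assoc]
  have hRHR : R⁻¹ * Hm * R⁻¹ = 1 := by
    rw [← hRR, ← Matrix.mul_assoc R⁻¹ R R, hRl, Matrix.one_mul, hRr]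
  have hsand1 : (B - (1-ε) • 1).PosSemidef := by
    have h := h1.mul_mul_conjTranspose_same R⁻¹
    rw [hRinvH] at h
    have e1 : R⁻¹ * (T - (1-ε) • Hm) * R⁻¹ = B - (1-ε) • 1 := by
      rw [Matrix.mul_sub, Matrix.sub_mul, mul_smul_comm, smul_mul_assoc, hRHR]
    rwa [e1] at h
  have hsand2 : ((1+ε) • 1 - B).PosSemidef := by
    have h := h2.mul_mul_conjTranspose_same R⁻¹
    rw [hRinvH] at h
    have e1 : R⁻¹ * ((1+ε) • Hm - T) * R⁻¹ = (1+ε) • 1 - B := by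
      rw [Matrix.mul_sub, Matrix.sub_mul, mul_smul_comm, smul_mul_assoc, hRHR]
    rwa [e1] at h
  obtain ⟨U, hU1, hU2, hB⟩ := spectral_real B hBh
  set f := hBh.eigenvalues with hfdef
  have hflb : ∀ j, 1 - ε ≤ f j := fun j => eig_lb B U f hU1 hB (1-ε) hsand1 j
  have hfub : ∀ j, f j ≤ 1 + ε := fun j => eig_ub B U f hU1 hB (1+ε) hsand2 j
  have hfpos : ∀ j, 0 < f j := fun j => lt_of_lt_of_le (by linarith) (hflb j)
  have hTdet : IsUnit T.det := hT.det_pos.ne'.isUnit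
  -- A = R * T⁻¹ * R is the inverse of B
  have hAB : (R * T⁻¹ * R) * B = 1 := by
    rw [hBdef]
    simp only [Matrix.mul_assoc]
    rw [← Matrix.mul_assoc R R⁻¹ (T * R⁻¹), hRr, Matrix.one_mul,
      ← Matrix.mul_assoc T⁻¹ T R⁻¹, Matrix.nonsing_inv_mul T hTdet, Matrix.one_mul, hRr]
  have hBC : B * (U * diagonal f⁻¹ * Uᴴ) = 1 := by
    rw [hB]
    simp only [Matrix.mul_assoc]
    rw [← Matrix.mul_assoc Uᴴ U (diagonal f⁻¹ * Uᴴ), hU1, Matrix.one_mul,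
      ← Matrix.mul_assoc (diagonal f) (diagonal f⁻¹) Uᴴ, diagonal_mul_diagonal]
    have : (fun i => f i * f⁻¹ i) = fun _ => (1:ℝ) := by
      funext j; exact mul_inv_cancel₀ (hfpos j).ne'
    rw [this, diagonal_one, Matrix.one_mul, hU2]
  have hA_eq : R * T⁻¹ * R = U * diagonal f⁻¹ * Uᴴ := by
    calc R * T⁻¹ * R = (R * T⁻¹ * R) * (B * (U * diagonal f⁻¹ * Uᴴ)) := by
          rw [hBC, Matrix.mul_one]
      _ = ((R * T⁻¹ * R) * B) * (U * diagonal f⁻¹ * Uᴴ) := by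
          simp only [Matrix.mul_assoc]
      _ = U * diagonal f⁻¹ * Uᴴ := by rw [hAB, Matrix.one_mul]
  set g : Fin d → ℝ := fun j => f j - 2 + (f j)⁻¹ with hgdef
  refine ⟨U * diagonal g * Uᴴ, ?_, ?_⟩
  · rw [hA_eq, hB]
    have hone : (1 : Matrix (Fin d) (Fin d) ℝ) = U * diagonal (fun _ => 1) * Uᴴ := by
      rw [diagonal_one, Matrix.mul_one, hU2]
    have hfun : f⁻¹ = fun j => (1 - (f j - 1) + g j) := by
      funext j
      rw [hgdef]
      simp only [Pi.inv_apply]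
      ring
    rw [hfun]
    have expand : diagonal (fun j => (1 - (f j - 1) + g j))
        = diagonal (fun _ => (1:ℝ)) - (diagonal f - diagonal (fun _ => 1)) + diagonal g := by
      ext i k
      rcases eq_or_ne i k with rfl | h
      · simp [diagonal_apply_eq]
      · simp [diagonal_apply_ne _ h, Matrix.one_apply_ne h]
    rw [expand]
    simp only [Matrix.mul_sub, Matrix.mul_add, Matrix.sub_mul, Matrix.add_mul]
    rw [← hone]
  · intro v
    apply norm2_conj_mulVec_le U hU1 hU2 g _ (by positivity)
    intro j
    have hl := hflb j; have hu := hfub j; have hp := hfpos j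
    have hinv : f j * (f j)⁻¹ = 1 := mul_inv_cancel₀ hp.ne'
    have hkey : g j * f j = (f j - 1)^2 := by
      rw [hgdef]; field_simp; ring
    rw [abs_le]
    constructor
    · nlinarith [sq_nonneg (f j - 1), inv_pos.mpr hp]
    · nlinarith [sq_nonneg (f j - 1)]

lemma mulVec_sum' {ι : Type*} (M : Matrix (Fin d) (Fin d) ℝ) (s : Finset ι)
    (x : ι → Fin d → ℝ) : M *ᵥ (∑ i ∈ s, x i) = ∑ i ∈ s, M *ᵥ x i := by
  ext j
  simp [mulVec, dotProduct, Finset.mul_sum, Finset.sum_apply]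
  rw [Finset.sum_comm]

lemma step {d m : ℕ} (hm : m ≠ 0) {R Hm : Matrix (Fin d) (Fin d) ℝ}
    (hRh : R.IsHermitian) (hRl : R⁻¹ * R = 1) (hRr : R * R⁻¹ = 1) (hRR : R * R = Hm)
    {ε : ℝ} (hε1 : 0 < ε) (hε2 : ε ≤ 1/2)
    (Ht : Fin m → Matrix (Fin d) (Fin d) ℝ) (hPD : ∀ i, (Ht i).PosDef)
    (happ : ∀ i, (Ht i - (1-ε) • Hm).PosSemidef ∧ ((1+ε) • Hm - Ht i).PosSemidef)
    (havg : ((1:ℝ)/m) • ∑ i, Ht i = Hm) (Δ : Fin d → ℝ) :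
    norm2 (R *ᵥ (Δ - ((1:ℝ)/m) • ∑ i, (Ht i)⁻¹ *ᵥ (Hm *ᵥ Δ)))
      ≤ 3 * ε^2 * norm2 (R *ᵥ Δ) := by
  have hmR : (m:ℝ) ≠ 0 := Nat.cast_ne_zero.mpr hm
  set v := R *ᵥ Δ with hv
  set c : ℝ := (1:ℝ)/m with hc
  choose N hN1 hN2 using fun i =>
    local_bound hRh hRl hRr hRR hε1 hε2 (hPD i) (happ i).1 (happ i).2
  have hRHR : R⁻¹ * Hm * R⁻¹ = 1 := by
    rw [← hRR, ← Matrix.mul_assoc R⁻¹ R R, hRl, Matrix.one_mul, hRr]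
  have hsumHt : ∑ i, Ht i = (m:ℝ) • Hm := by
    rw [← havg, smul_smul]
    rw [show (m:ℝ) * ((1:ℝ)/m) = 1 by field_simp, one_smul]
  have hBsum : (∑ i, R⁻¹ * Ht i * R⁻¹) = (m:ℝ) • (1 : Matrix (Fin d) (Fin d) ℝ) := by
    have : (∑ i, R⁻¹ * Ht i * R⁻¹) = R⁻¹ * (∑ i, Ht i) * R⁻¹ := by
      rw [Finset.mul_sum, Finset.sum_mul]
    rw [this, hsumHt, mul_smul_comm, smul_mul_assoc, hRHR]
  have hterm : ∀ i, R *ᵥ ((Ht i)⁻¹ *ᵥ (Hm *ᵥ Δ)) = (R * (Ht i)⁻¹ * R) *ᵥ v := by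
    intro i
    rw [← hRR, hv]
    simp only [mulVec_mulVec, Matrix.mul_assoc]
  have hterm2 : ∀ i, (R * (Ht i)⁻¹ * R) *ᵥ v
      = v - ((R⁻¹ * Ht i * R⁻¹) *ᵥ v - v) + N i *ᵥ v := by
    intro i
    rw [hN1 i, add_mulVec, sub_mulVec, sub_mulVec, one_mulVec]
  have hsum : ∑ i, (R * (Ht i)⁻¹ * R) *ᵥ v = (m:ℝ) • v + ∑ i, N i *ᵥ v := by
    simp only [hterm2]
    rw [Finset.sum_add_distrib, Finset.sum_sub_distrib, Finset.sum_sub_distrib,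
      ← sum_mulVec Finset.univ (fun i => R⁻¹ * Ht i * R⁻¹) v, hBsum,
      smul_mulVec, one_mulVec, Finset.sum_const, Finset.card_univ,
      Fintype.card_fin, ← Nat.cast_smul_eq_nsmul ℝ m v]
    abel
  have hvec : R *ᵥ (Δ - c • ∑ i, (Ht i)⁻¹ *ᵥ (Hm *ᵥ Δ)) = -(c • ∑ i, N i *ᵥ v) := by
    rw [mulVec_sub, mulVec_smul, mulVec_sum', ← hv]
    simp only [hterm]
    rw [hsum, smul_add, smul_smul]
    have hcm : c * (m:ℝ) = 1 := by rw [hc]; field_simp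
    rw [hcm, one_smul]
    abel
  rw [hvec, norm2_neg, norm2_smul]
  have hc0 : 0 ≤ c := by positivity
  rw [abs_of_nonneg hc0]
  calc c * norm2 (∑ i, N i *ᵥ v) ≤ c * ∑ i, norm2 (N i *ᵥ v) := by
        apply mul_le_mul_of_nonneg_left (norm2_sum_le _ _) hc0
    _ ≤ c * ∑ _i : Fin m, 3 * ε^2 * norm2 v := by
        apply mul_le_mul_of_nonneg_left (Finset.sum_le_sum fun i _ => hN2 i v) hc0
    _ = 3 * ε^2 * norm2 v := by
        rw [Finset.sum_const, Finset.card_univ, Fintype.card_fin, nsmul_eq_mul]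
        rw [hc]
        field_simp

open scoped MatrixOrder in
lemma exists_sqrt_aux {H : Matrix (Fin d) (Fin d) ℝ} (hH : H.PosSemidef) :
    ∃ R : Matrix (Fin d) (Fin d) ℝ, R.IsHermitian ∧ R * R = H :=
  ⟨CFC.sqrt H, (Matrix.nonneg_iff_posSemidef.mp (CFC.sqrt_nonneg H)).1,
    CFC.sqrt_mul_sqrt_self H hH.nonneg⟩

lemma dot_mulVec_eq (M : Matrix (Fin d) (Fin d) ℝ) (x : Fin d → ℝ) :
    (M *ᵥ x) ⬝ᵥ (M *ᵥ x) = x ⬝ᵥ ((Mᴴ * M) *ᵥ x) := by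
  rw [dotProduct_mulVec, vecMul_eq_conj, mulVec_mulVec, dotProduct_comm]

end GiantAux

open GiantAux

/-- global convergence of GIANT (averaged local Newton directions) for a
quadratic objective with constant Hessian `H` and minimizer `wstar`. -/
theorem giant_global_convergence_quadratic {d m : ℕ}
    (H : Matrix (Fin d) (Fin d) ℝ) (hH : H.PosDef)
    (wstar : Fin d → ℝ) (ε : ℝ) (hε : 0 < ε ∧ ε ≤ 1 / 2)
    (Htil : ℕ → Fin m → Matrix (Fin d) (Fin d) ℝ)
    (hHtilPD : ∀ t i, (Htil t i).PosDef)
    (happrox : ∀ t i,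
      (Htil t i - (1 - ε) • H).PosSemidef ∧ ((1 + ε) • H - Htil t i).PosSemidef)
    (havg : ∀ t, ((1 : ℝ) / m) • ∑ i, Htil t i = H)
    (w : ℕ → Fin d → ℝ)
    (hupdate : ∀ t,
      w (t + 1) = w t - ((1 : ℝ) / m) • ∑ i, (Htil t i)⁻¹ *ᵥ (H *ᵥ (w t - wstar))) :
    ∀ t, norm2 (w t - wstar) ≤
      (3 * ε ^ 2) ^ t * Real.sqrt (sMax hH.1 / sMin hH.1) * norm2 (w 0 - wstar) := by
  rcases Nat.eq_zero_or_pos d with hd | hd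
  · subst hd
    intro t
    have hz : ∀ x : Fin 0 → ℝ, norm2 x = 0 := by
      intro x; simp [norm2, dotProduct]
    rw [hz, hz, mul_zero]
  · -- main case
    haveI : Nonempty (Fin d) := ⟨⟨0, hd⟩⟩
    have hm : m ≠ 0 := by
      intro h
      subst h
      have h0 := havg 0
      simp only [Finset.univ_eq_empty, Finset.sum_empty, smul_zero] at h0
      set x : Fin d → ℝ := Pi.single ⟨0, hd⟩ 1 with hxdef
      have hx : x ≠ 0 := by
        intro hx0
        have := congr_fun hx0 ⟨0, hd⟩
        simp [hxdef] at this
      have hpos := hH.dotProduct_mulVec_pos hx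
      rw [← h0] at hpos
      simp at hpos
    obtain ⟨R, hRh, hRR⟩ := exists_sqrt_aux hH.posSemidef
    have hdet : IsUnit R.det := by
      have hsq : R.det * R.det = H.det := by rw [← det_mul, hRR]
      have hHdet := hH.det_pos
      have hne : R.det ≠ 0 := by
        intro h; rw [h, mul_zero] at hsq; rw [← hsq] at hHdet; exact lt_irrefl _ hHdet
      exact hne.isUnit
    have hRl : R⁻¹ * R = 1 := Matrix.nonsing_inv_mul R hdet
    have hRr : R * R⁻¹ = 1 := Matrix.mul_nonsing_inv R hdet
    -- iteration bound
    have hstep : ∀ t, norm2 (R *ᵥ (w (t+1) - wstar)) ≤ 3*ε^2 * norm2 (R *ᵥ (w t - wstar)) := by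
      intro t
      have h := step hm hRh hRl hRr hRR hε.1 hε.2 (Htil t) (hHtilPD t) (happrox t)
        (havg t) (w t - wstar)
      have harg : w (t+1) - wstar
          = (w t - wstar) - ((1:ℝ)/m) • ∑ i, (Htil t i)⁻¹ *ᵥ (H *ᵥ (w t - wstar)) := by
        rw [hupdate t, sub_right_comm]
      rw [harg]
      exact h
    have hiter : ∀ t, norm2 (R *ᵥ (w t - wstar))
        ≤ (3*ε^2)^t * norm2 (R *ᵥ (w 0 - wstar)) := by
      intro t
      induction t with
      | zero => simp
      | succ t ih =>
        calc norm2 (R *ᵥ (w (t+1) - wstar)) ≤ 3*ε^2 * norm2 (R *ᵥ (w t - wstar)) := hstep t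
          _ ≤ 3*ε^2 * ((3*ε^2)^t * norm2 (R *ᵥ (w 0 - wstar))) := by
              apply mul_le_mul_of_nonneg_left ih (by positivity)
          _ = (3*ε^2)^(t+1) * norm2 (R *ᵥ (w 0 - wstar)) := by ring
    -- eigenvalue bounds of H
    obtain ⟨U, hU1, hU2, hHd⟩ := spectral_real H hH.1
    have hminle : ∀ j, sMin hH.1 ≤ hH.1.eigenvalues j := fun j =>
      ciInf_le (Set.Finite.bddBelow (Set.finite_range _)) j
    have hlemax : ∀ j, hH.1.eigenvalues j ≤ sMax hH.1 := fun j =>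
      le_ciSup (Set.Finite.bddAbove (Set.finite_range _)) j
    have hminpos : 0 < sMin hH.1 := by
      obtain ⟨j, -, hj⟩ := Finset.exists_min_image Finset.univ hH.1.eigenvalues
        ⟨Classical.arbitrary (Fin d), Finset.mem_univ _⟩
      exact lt_of_lt_of_le (hH.eigenvalues_pos j)
        (le_ciInf fun k => hj k (Finset.mem_univ k))
    have hmaxpos : 0 < sMax hH.1 :=
      lt_of_lt_of_le hminpos (le_trans (hminle (Classical.arbitrary (Fin d)))
        (hlemax (Classical.arbitrary (Fin d))))
    have hRdot : ∀ x : Fin d → ℝ, (R *ᵥ x) ⬝ᵥ (R *ᵥ x) = x ⬝ᵥ (H *ᵥ x) := by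
      intro x
      rw [dot_mulVec_eq, hRh.eq, hRR]
    have hlow : ∀ x : Fin d → ℝ, Real.sqrt (sMin hH.1) * norm2 x ≤ norm2 (R *ᵥ x) := by
      intro x
      have h1 : sMin hH.1 * (x ⬝ᵥ x) ≤ x ⬝ᵥ (H *ᵥ x) := by
        have := le_quad U hU2 _ _ hminle x
        rwa [← hHd] at this
      calc Real.sqrt (sMin hH.1) * norm2 x = Real.sqrt (sMin hH.1 * (x ⬝ᵥ x)) := by
            rw [Real.sqrt_mul hminpos.le]; rfl
        _ ≤ Real.sqrt (x ⬝ᵥ (H *ᵥ x)) := Real.sqrt_le_sqrt h1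
        _ = norm2 (R *ᵥ x) := by rw [norm2, hRdot]
    have hhigh : ∀ x : Fin d → ℝ, norm2 (R *ᵥ x) ≤ Real.sqrt (sMax hH.1) * norm2 x := by
      intro x
      have h1 : x ⬝ᵥ (H *ᵥ x) ≤ sMax hH.1 * (x ⬝ᵥ x) := by
        have := quad_le U hU2 _ _ hlemax x
        rwa [← hHd] at this
      calc norm2 (R *ᵥ x) = Real.sqrt (x ⬝ᵥ (H *ᵥ x)) := by rw [norm2, hRdot]
        _ ≤ Real.sqrt (sMax hH.1 * (x ⬝ᵥ x)) := Real.sqrt_le_sqrt h1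
        _ = Real.sqrt (sMax hH.1) * norm2 x := by rw [Real.sqrt_mul hmaxpos.le]; rfl
    intro t
    have hsmin : (0:ℝ) < Real.sqrt (sMin hH.1) := Real.sqrt_pos.mpr hminpos
    have h1 : norm2 (w t - wstar) ≤ norm2 (R *ᵥ (w t - wstar)) / Real.sqrt (sMin hH.1) := by
      rw [le_div_iff₀ hsmin, mul_comm]
      exact hlow _
    calc norm2 (w t - wstar) ≤ norm2 (R *ᵥ (w t - wstar)) / Real.sqrt (sMin hH.1) := h1
      _ ≤ ((3*ε^2)^t * norm2 (R *ᵥ (w 0 - wstar))) / Real.sqrt (sMin hH.1) :=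
          (div_le_div_iff_of_pos_right hsmin).mpr (hiter t)
      _ ≤ ((3*ε^2)^t * (Real.sqrt (sMax hH.1) * norm2 (w 0 - wstar)))
            / Real.sqrt (sMin hH.1) := by
          apply (div_le_div_iff_of_pos_right hsmin).mpr
          exact mul_le_mul_of_nonneg_left (hhigh _) (by positivity)
      _ = (3 * ε ^ 2) ^ t * Real.sqrt (sMax hH.1 / sMin hH.1) * norm2 (w 0 - wstar) := by
          rw [Real.sqrt_div hmaxpos.le]
          field_simp
end
end

section
/- Let F : ℝ^d → ℝ be twice continuously differentiable with a minimizer w*, and suppose its Hessian ∇²F is L-Lipschitz in spectral norm: ‖∇²F(w) − ∇²F(w′)‖₂ ≤ L‖w − w′‖₂ for all w, w′. Fix an iterate w_t, let H_t = ∇²F(w_t) be symmetric positive definite with condition number κ_t = σ_max(H_t)/σ_min(H_t), and let ε ∈ (0, 1/2]. Suppose there are m symmetric positive definite matrices H̃_{t,1}, …, H̃_{t,m} with (1−ε)H_t ⪯ H̃_{t,i} ⪯ (1+ε)H_t for every i ∈ [m] and (1/m)·Σ_{i=1}^m H̃_{t,i} = H_t, and set w_{t+1} = w_t − (1/m)·Σ_{i=1}^m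 H̃_{t,i}⁻¹ ∇F(w_t). Then ‖w_{t+1} − w*‖₂ ≤ 3ε²·√κ_t·‖w_t − w*‖₂ + (L/σ_min(H_t))·‖w_t − w*‖₂². -/
open Matrix

noncomputable section

open scoped RealInnerProductSpace

namespace GiantAux
variable {d : ℕ}

lemma inner_eq_sum (x y : EuclideanSpace ℝ (Fin d)) : ⟪x, y⟫ = ∑ i, x i * y i := by
  simp [PiLp.inner_apply, RCLike.inner_apply, starRingEnd_apply]
  exact Finset.sum_congr rfl fun _ _ => mul_comm _ _

lemma toEuclideanLin_apply' (M : Matrix (Fin d) (Fin d) ℝ) (x : EuclideanSpace ℝ (Fin d)) (i : Fin d) :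
    Matrix.toEuclideanLin M x i = (M *ᵥ (fun j => x j)) i := by
  rfl

lemma toEuclideanLin_of_mulVec {M : Matrix (Fin d) (Fin d) ℝ} {v : EuclideanSpace ℝ (Fin d)}
    {μ : ℝ} (h : M *ᵥ (fun j => v j) = μ • (fun j => v j)) :
    Matrix.toEuclideanLin M v = μ • v := by
  ext i
  rw [toEuclideanLin_apply', h]
  simp

end GiantAux
section
variable (b : OrthonormalBasis (Fin d) ℝ (EuclideanSpace ℝ (Fin d)))
    (M : Matrix (Fin d) (Fin d) ℝ) (μ : Fin d → ℝ)

namespace GiantAux2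

lemma repr_toEuclideanLin
    (hMb : ∀ i, Matrix.toEuclideanLin M (b i) = μ i • b i)
    (x : EuclideanSpace ℝ (Fin d)) (j : Fin d) :
    b.repr (Matrix.toEuclideanLin M x) j = μ j * b.repr x j := by
  have hx : Matrix.toEuclideanLin M x = ∑ i, b.repr x i • (μ i • b i) := by
    conv_lhs => rw [← b.sum_repr x, map_sum]
    simp_rw [_root_.map_smul, hMb]
  rw [hx, map_sum]
  simp_rw [_root_.map_smul, b.repr_self]
  classical
  have : (∑ i, b.repr x i • μ i • EuclideanSpace.single i (1:ℝ)) j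
      = ∑ i, b.repr x i * (μ i * (if j = i then 1 else 0)) := by
    rw [WithLp.ofLp_sum, Finset.sum_apply]
    refine Finset.sum_congr rfl fun i _ => ?_
    simp [EuclideanSpace.single_apply, smul_eq_mul]
  rw [this]
  simp [Finset.sum_ite_eq', mul_comm]

lemma norm_toEuclideanLin_le
    (hMb : ∀ i, Matrix.toEuclideanLin M (b i) = μ i • b i)
    {c : ℝ} (hc0 : 0 ≤ c) (hc : ∀ i, |μ i| ≤ c)
    (x : EuclideanSpace ℝ (Fin d)) :
    ‖Matrix.toEuclideanLin M x‖ ≤ c * ‖x‖ := by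
  rw [← b.repr.norm_map (Matrix.toEuclideanLin M x), ← b.repr.norm_map x,
    EuclideanSpace.norm_eq, EuclideanSpace.norm_eq]
  have key : ∀ j, ‖b.repr (Matrix.toEuclideanLin M x) j‖ ^ 2
      ≤ c ^ 2 * ‖b.repr x j‖ ^ 2 := by
    intro j
    rw [GiantAux2.repr_toEuclideanLin b M μ hMb x j]
    have : ‖μ j * b.repr x j‖ = |μ j| * ‖b.repr x j‖ := by
      simp [abs_mul]
    rw [this, mul_pow]
    have h2 : |μ j| ^ 2 ≤ c ^ 2 := by
      have := hc j
      nlinarith [abs_nonneg (μ j)]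
    nlinarith [norm_nonneg (b.repr x j), sq_nonneg (‖b.repr x j‖)]
  calc Real.sqrt (∑ j, ‖b.repr (Matrix.toEuclideanLin M x) j‖ ^ 2)
      ≤ Real.sqrt (∑ j, c ^ 2 * ‖b.repr x j‖ ^ 2) := by
        apply Real.sqrt_le_sqrt
        exact Finset.sum_le_sum fun j _ => key j
    _ = c * Real.sqrt (∑ j, ‖b.repr x j‖ ^ 2) := by
        rw [← Finset.mul_sum, Real.sqrt_mul (sq_nonneg c), Real.sqrt_sq hc0]

lemma inner_toEuclideanLin_eq
    (hMb : ∀ i, Matrix.toEuclideanLin M (b i) = μ i • b i)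
    (x : EuclideanSpace ℝ (Fin d)) :
    ⟪x, Matrix.toEuclideanLin M x⟫ = ∑ j, μ j * (b.repr x j) ^ 2 := by
  rw [← b.repr.inner_map_map x (Matrix.toEuclideanLin M x), GiantAux.inner_eq_sum]
  refine Finset.sum_congr rfl fun j _ => ?_
  rw [GiantAux2.repr_toEuclideanLin b M μ hMb x j]
  ring

lemma norm_sq_eq_sum_repr (x : EuclideanSpace ℝ (Fin d)) :
    ‖x‖ ^ 2 = ∑ j, (b.repr x j) ^ 2 := by
  rw [← b.repr.norm_map x, EuclideanSpace.norm_eq, Real.sq_sqrt (by positivity)]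
  simp [sq_abs]

end GiantAux2
end
namespace GiantAux3

lemma inner_toEuclideanLin_nonneg {M : Matrix (Fin d) (Fin d) ℝ} (hM : M.PosSemidef)
    (x : EuclideanSpace ℝ (Fin d)) : 0 ≤ ⟪x, Matrix.toEuclideanLin M x⟫ := by
  have h := hM.dotProduct_mulVec_nonneg (fun j => x j)
  rw [GiantAux.inner_eq_sum]
  simpa [dotProduct, GiantAux.toEuclideanLin_apply'] using h

lemma posSemidef_of_inner {M : Matrix (Fin d) (Fin d) ℝ} (hM : M.IsHermitian)
    (h : ∀ x : EuclideanSpace ℝ (Fin d), 0 ≤ ⟪x, Matrix.toEuclideanLin M x⟫) :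
    M.PosSemidef := by
  refine Matrix.PosSemidef.of_dotProduct_mulVec_nonneg hM fun x => ?_
  have h2 := h ((WithLp.equiv 2 _).symm x)
  rw [GiantAux.inner_eq_sum] at h2
  simpa [dotProduct, GiantAux.toEuclideanLin_apply'] using h2

lemma eigen_toEuclideanLin {T : Matrix (Fin d) (Fin d) ℝ} (hT : T.IsHermitian) (i : Fin d) :
    Matrix.toEuclideanLin T (hT.eigenvectorBasis i) =
      hT.eigenvalues i • hT.eigenvectorBasis i := by
  apply GiantAux.toEuclideanLin_of_mulVec
  exact_mod_cast hT.mulVec_eigenvectorBasis i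

lemma inner_self_eigenvectorBasis {T : Matrix (Fin d) (Fin d) ℝ} (hT : T.IsHermitian) (i : Fin d) :
    ⟪hT.eigenvectorBasis i, hT.eigenvectorBasis i⟫ = 1 := by
  rw [real_inner_self_eq_norm_sq, hT.eigenvectorBasis.orthonormal.1 i]
  norm_num

lemma toEuclideanLin_one' (x : EuclideanSpace ℝ (Fin d)) :
    Matrix.toEuclideanLin (1 : Matrix (Fin d) (Fin d) ℝ) x = x := by
  ext i
  rw [GiantAux.toEuclideanLin_apply', Matrix.one_mulVec]

lemma eig_ge_of_posSemidef {T : Matrix (Fin d) (Fin d) ℝ} (hT : T.IsHermitian) {a : ℝ}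
    (h : (T - a • 1).PosSemidef) (i : Fin d) : a ≤ hT.eigenvalues i := by
  have h0 := inner_toEuclideanLin_nonneg h (hT.eigenvectorBasis i)
  rw [map_sub, _root_.map_smul] at h0
  simp only [LinearMap.sub_apply, LinearMap.smul_apply, toEuclideanLin_one',
    inner_sub_right, inner_smul_right, real_inner_smul_right,
    eigen_toEuclideanLin hT i, inner_self_eigenvectorBasis hT i] at h0
  linarith

lemma eig_le_of_posSemidef {T : Matrix (Fin d) (Fin d) ℝ} (hT : T.IsHermitian) {c : ℝ}
    (h : (c • 1 - T).PosSemidef) (i : Fin d) : hT.eigenvalues i ≤ c := by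
  have h0 := inner_toEuclideanLin_nonneg h (hT.eigenvectorBasis i)
  rw [map_sub, _root_.map_smul] at h0
  simp only [LinearMap.sub_apply, LinearMap.smul_apply, toEuclideanLin_one',
    inner_sub_right, inner_smul_right, real_inner_smul_right,
    eigen_toEuclideanLin hT i, inner_self_eigenvectorBasis hT i] at h0
  linarith

end GiantAux3
namespace GiantAux4
open GiantAux GiantAux2 GiantAux3

lemma norm_le_of_eig {T : Matrix (Fin d) (Fin d) ℝ} (hT : T.IsHermitian) {c : ℝ} (hc0 : 0 ≤ c)
    (hc : ∀ i, |hT.eigenvalues i| ≤ c) (x : EuclideanSpace ℝ (Fin d)) :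
    ‖Matrix.toEuclideanLin T x‖ ≤ c * ‖x‖ :=
  norm_toEuclideanLin_le hT.eigenvectorBasis T hT.eigenvalues
    (fun i => eigen_toEuclideanLin hT i) hc0 hc x

lemma rayleigh_le {T : Matrix (Fin d) (Fin d) ℝ} (hT : T.IsHermitian) {cM : ℝ}
    (h : ∀ i, hT.eigenvalues i ≤ cM) (x : EuclideanSpace ℝ (Fin d)) :
    ⟪x, Matrix.toEuclideanLin T x⟫ ≤ cM * ‖x‖ ^ 2 := by
  rw [inner_toEuclideanLin_eq hT.eigenvectorBasis T hT.eigenvalues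
    (fun i => eigen_toEuclideanLin hT i) x, norm_sq_eq_sum_repr hT.eigenvectorBasis x,
    Finset.mul_sum]
  exact Finset.sum_le_sum fun j _ => mul_le_mul_of_nonneg_right (h j) (sq_nonneg _)

lemma rayleigh_ge {T : Matrix (Fin d) (Fin d) ℝ} (hT : T.IsHermitian) {cm : ℝ}
    (h : ∀ i, cm ≤ hT.eigenvalues i) (x : EuclideanSpace ℝ (Fin d)) :
    cm * ‖x‖ ^ 2 ≤ ⟪x, Matrix.toEuclideanLin T x⟫ := by
  rw [inner_toEuclideanLin_eq hT.eigenvectorBasis T hT.eigenvalues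
    (fun i => eigen_toEuclideanLin hT i) x, norm_sq_eq_sum_repr hT.eigenvectorBasis x,
    Finset.mul_sum]
  exact Finset.sum_le_sum fun j _ => mul_le_mul_of_nonneg_right (h j) (sq_nonneg _)

lemma toEuclideanLin_mul (A B : Matrix (Fin d) (Fin d) ℝ) (x : EuclideanSpace ℝ (Fin d)) :
    Matrix.toEuclideanLin (A * B) x = Matrix.toEuclideanLin A (Matrix.toEuclideanLin B x) := by
  ext i
  rw [toEuclideanLin_apply', toEuclideanLin_apply']
  have : (fun j => Matrix.toEuclideanLin B x j) = B *ᵥ (fun j => x j) := by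
    ext j; rw [toEuclideanLin_apply']
  rw [this, Matrix.mulVec_mulVec]

lemma eigen_inv {T : Matrix (Fin d) (Fin d) ℝ} (hT : T.IsHermitian) (hdet : IsUnit T.det)
    (i : Fin d) (hne : hT.eigenvalues i ≠ 0) :
    Matrix.toEuclideanLin T⁻¹ (hT.eigenvectorBasis i) =
      (hT.eigenvalues i)⁻¹ • hT.eigenvectorBasis i := by
  have h2 : Matrix.toEuclideanLin (T⁻¹ * T) (hT.eigenvectorBasis i) = hT.eigenvectorBasis i := by
    rw [Matrix.nonsing_inv_mul T hdet, toEuclideanLin_one']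
  rw [toEuclideanLin_mul, eigen_toEuclideanLin hT i, _root_.map_smul] at h2
  have h3 := congrArg (fun y : EuclideanSpace ℝ (Fin d) => (hT.eigenvalues i)⁻¹ • y) h2
  simp only [smul_smul, inv_mul_cancel₀ hne, one_smul] at h3
  exact h3

end GiantAux4
namespace GiantAux5
open GiantAux GiantAux2 GiantAux3 GiantAux4 intervalIntegral

lemma taylor_bound {d : ℕ} (F : EuclideanSpace ℝ (Fin d) → ℝ) (hF : ContDiff ℝ 2 F)
    {L : ℝ} (hL : 0 ≤ L)
    (Hess : EuclideanSpace ℝ (Fin d) → Matrix (Fin d) (Fin d) ℝ)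
    (hHess : ∀ w y, fderiv ℝ (gradient F) w y = Matrix.toEuclideanLin (Hess w) y)
    (hLip : ∀ w w' x, ‖Matrix.toEuclideanLin (Hess w - Hess w') x‖ ≤ L * ‖w - w'‖ * ‖x‖)
    (wstar wt : EuclideanSpace ℝ (Fin d)) (hgrad0 : gradient F wstar = 0) :
    ‖gradient F wt - Matrix.toEuclideanLin (Hess wt) (wt - wstar)‖
      ≤ L / 2 * ‖wt - wstar‖ ^ 2 := by
  set Δ := wt - wstar with hΔ
  set γ : ℝ → EuclideanSpace ℝ (Fin d) := fun s => wstar + s • Δ with hγ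
  have hγ0 : γ 0 = wstar := by simp [hγ]
  have hγ1 : γ 1 = wt := by simp [hγ, hΔ]
  have hγs : ∀ s, γ s - wt = (s - 1) • Δ := by
    intro s
    rw [hγ]
    have : wt = wstar + Δ := by rw [hΔ]; abel
    rw [this]
    module
  have hγcont : Continuous γ :=
    continuous_const.add (continuous_id.smul continuous_const)
  have hgradeq : gradient F = fun w => (InnerProductSpace.toDual ℝ _).symm (fderiv ℝ F w) := rfl
  have hgc : ContDiff ℝ 1 (gradient F) := by
    rw [hgradeq]
    exact (InnerProductSpace.toDual ℝ _).symm.contDiff.comp (hF.fderiv_right le_rfl)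
  have hd : ∀ s : ℝ, HasDerivAt (fun u => gradient F (γ u))
      (Matrix.toEuclideanLin (Hess (γ s)) Δ) s := by
    intro s
    have h1 : HasDerivAt γ Δ s := by
      have := ((hasDerivAt_id s).smul_const Δ).const_add wstar
      simpa [hγ] using this
    have h2 : HasFDerivAt (gradient F) (fderiv ℝ (gradient F) (γ s)) (γ s) :=
      ((hgc.differentiable one_ne_zero) (γ s)).hasFDerivAt
    have h3 := h2.comp_hasDerivAt s h1
    rw [show fderiv ℝ (gradient F) (γ s) Δ = Matrix.toEuclideanLin (Hess (γ s)) Δ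
      from hHess _ _] at h3
    exact h3
  have hcont : Continuous fun s : ℝ => Matrix.toEuclideanLin (Hess (γ s)) Δ := by
    have h1 : Continuous (fderiv ℝ (gradient F)) := hgc.continuous_fderiv one_ne_zero
    have h2 : Continuous fun s : ℝ => fderiv ℝ (gradient F) (γ s) Δ :=
      (h1.comp hγcont).clm_apply continuous_const
    convert h2 using 1
    funext s
    rw [hHess]
  have hInt : IntervalIntegrable (fun s => Matrix.toEuclideanLin (Hess (γ s)) Δ)
      MeasureTheory.volume 0 1 := hcont.intervalIntegrable 0 1
  have hFTC : ∫ s in (0:ℝ)..1, Matrix.toEuclideanLin (Hess (γ s)) Δ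
      = gradient F wt := by
    rw [integral_eq_sub_of_hasDerivAt (fun s _ => hd s) hInt, hγ0, hγ1, hgrad0, sub_zero]
  have hsplit : gradient F wt - Matrix.toEuclideanLin (Hess wt) Δ
      = ∫ s in (0:ℝ)..1, (Matrix.toEuclideanLin (Hess (γ s)) Δ
          - Matrix.toEuclideanLin (Hess wt) Δ) := by
    rw [integral_sub hInt intervalIntegrable_const, hFTC, integral_const]
    norm_num
  rw [hsplit]
  have hbound : ∀ s ∈ Set.Ioc (0:ℝ) 1,
      ‖Matrix.toEuclideanLin (Hess (γ s)) Δ - Matrix.toEuclideanLin (Hess wt) Δ‖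
        ≤ L * ‖Δ‖ ^ 2 * (1 - s) := by
    intro s hs
    have h1 : Matrix.toEuclideanLin (Hess (γ s)) Δ - Matrix.toEuclideanLin (Hess wt) Δ
        = Matrix.toEuclideanLin (Hess (γ s) - Hess wt) Δ := by
      ext i
      simp [GiantAux.toEuclideanLin_apply', Matrix.sub_mulVec]
    rw [h1]
    have h2 := hLip (γ s) wt Δ
    have h3 : ‖γ s - wt‖ = (1 - s) * ‖Δ‖ := by
      rw [hγs s, norm_smul, Real.norm_eq_abs,
        abs_of_nonpos (by linarith [hs.2] : s - 1 ≤ 0)]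
      ring
    rw [h3] at h2
    calc ‖Matrix.toEuclideanLin (Hess (γ s) - Hess wt) Δ‖
        ≤ L * ((1 - s) * ‖Δ‖) * ‖Δ‖ := h2
      _ = L * ‖Δ‖ ^ 2 * (1 - s) := by ring
  have hgInt : IntervalIntegrable (fun s => L * ‖Δ‖ ^ 2 * (1 - s))
      MeasureTheory.volume 0 1 :=
    (continuous_const.mul (continuous_const.sub continuous_id)).intervalIntegrable 0 1
  have := norm_integral_le_of_norm_le (f := fun s =>
      Matrix.toEuclideanLin (Hess (γ s)) Δ - Matrix.toEuclideanLin (Hess wt) Δ)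
    (g := fun s => L * ‖Δ‖ ^ 2 * (1 - s)) (μ := MeasureTheory.volume) (a := 0) (b := 1)
    (by norm_num) (MeasureTheory.ae_of_all _ fun s hs => hbound s hs) hgInt
  refine this.trans ?_
  have hval : ∫ s in (0:ℝ)..1, L * ‖Δ‖ ^ 2 * (1 - s) = L / 2 * ‖Δ‖ ^ 2 := by
    have : ∀ s : ℝ, L * ‖Δ‖ ^ 2 * (1 - s) = L * ‖Δ‖ ^ 2 - (L * ‖Δ‖ ^ 2) * s := by
      intro s; ring
    simp_rw [this]
    have hmulInt : IntervalIntegrable (fun s : ℝ => L * ‖Δ‖ ^ 2 * s)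
        MeasureTheory.volume 0 1 :=
      (continuous_const.mul continuous_id).intervalIntegrable 0 1
    rw [integral_sub intervalIntegrable_const hmulInt, integral_const]
    rw [intervalIntegral.integral_const_mul, integral_id]
    norm_num
    ring
  rw [hval]

end GiantAux5
namespace GiantAux6

lemma posSemidef_smul {M : Matrix (Fin d) (Fin d) ℝ} (hM : M.PosSemidef) {c : ℝ} (hc : 0 ≤ c) :
    (c • M).PosSemidef := by
  refine Matrix.PosSemidef.of_dotProduct_mulVec_nonneg ?_ fun x => ?_
  · show (c • M)ᴴ = c • M
    rw [Matrix.conjTranspose_smul, hM.1]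
    simp
  · rw [Matrix.smul_mulVec, dotProduct_smul, smul_eq_mul]
    exact mul_nonneg hc (hM.dotProduct_mulVec_nonneg x)

lemma norm_avg_le {m : ℕ} (hm : 0 < m) {E : Type*} [NormedAddCommGroup E] [NormedSpace ℝ E]
    (f : Fin m → E) {c : ℝ} (h : ∀ i, ‖f i‖ ≤ c) :
    ‖((1:ℝ)/m) • ∑ i, f i‖ ≤ c := by
  have hmR : (0:ℝ) < m := by exact_mod_cast hm
  rw [norm_smul]
  have h1 : ‖∑ i, f i‖ ≤ (m:ℝ) * c := by
    refine (norm_sum_le _ _).trans ?_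
    calc ∑ i, ‖f i‖ ≤ ∑ _i : Fin m, c := Finset.sum_le_sum fun i _ => h i
      _ = (m:ℝ) * c := by simp [mul_comm]
  calc ‖(1:ℝ)/m‖ * ‖∑ i, f i‖ = (1/m) * ‖∑ i, f i‖ := by
        rw [Real.norm_eq_abs, abs_of_pos (by positivity)]
    _ ≤ (1/m) * ((m:ℝ) * c) := mul_le_mul_of_nonneg_left h1 (by positivity)
    _ = c := by field_simp

open scoped MatrixOrder in
lemma exists_sqrt_psd {A : Matrix (Fin d) (Fin d) ℝ} (hA : A.PosSemidef) :
    ∃ S : Matrix (Fin d) (Fin d) ℝ, S.PosSemidef ∧ S * S = A :=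
  ⟨CFC.sqrt A, Matrix.nonneg_iff_posSemidef.mp (CFC.sqrt_nonneg A),
    CFC.sqrt_mul_sqrt_self A (Matrix.nonneg_iff_posSemidef.mpr hA)⟩

end GiantAux6

open GiantAux GiantAux2 GiantAux3 GiantAux4 GiantAux5 GiantAux6

set_option maxHeartbeats 1000000

/-- local convergence of one GIANT step (averaged local Newton directions)
for a twice continuously differentiable objective `F` with `L`-Lipschitz Hessian. -/
theorem giant_local_convergence {d m : ℕ}
    (F : EuclideanSpace ℝ (Fin d) → ℝ) (hF : ContDiff ℝ 2 F)
    (wstar : EuclideanSpace ℝ (Fin d)) (hmin : ∀ w, F wstar ≤ F w)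
    (L : ℝ)
    (Hess : EuclideanSpace ℝ (Fin d) → Matrix (Fin d) (Fin d) ℝ)
    (hHess : ∀ w y, fderiv ℝ (gradient F) w y = Matrix.toEuclideanLin (Hess w) y)
    (hLip : ∀ w w' x, ‖Matrix.toEuclideanLin (Hess w - Hess w') x‖ ≤ L * ‖w - w'‖ * ‖x‖)
    (wt : EuclideanSpace ℝ (Fin d)) (hHt : (Hess wt).PosDef)
    (ε : ℝ) (hε : 0 < ε ∧ ε ≤ 1 / 2)
    (Htil : Fin m → Matrix (Fin d) (Fin d) ℝ)
    (hHtilPD : ∀ i, (Htil i).PosDef)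
    (happrox : ∀ i,
      (Htil i - (1 - ε) • Hess wt).PosSemidef ∧ ((1 + ε) • Hess wt - Htil i).PosSemidef)
    (havg : ((1 : ℝ) / m) • ∑ i, Htil i = Hess wt)
    (wnext : EuclideanSpace ℝ (Fin d))
    (hupdate : wnext =
      wt - ((1 : ℝ) / m) • ∑ i, Matrix.toEuclideanLin (Htil i)⁻¹ (gradient F wt)) :
    ‖wnext - wstar‖ ≤
      3 * ε ^ 2 * Real.sqrt (sMax hHt.1 / sMin hHt.1) * ‖wt - wstar‖
        + (L / sMin hHt.1) * ‖wt - wstar‖ ^ 2 := by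
  obtain ⟨hε0, hε2⟩ := hε
  rcases Nat.eq_zero_or_pos d with hd0 | hd
  · subst hd0
    haveI : Subsingleton (EuclideanSpace ℝ (Fin 0)) :=
      ⟨fun a b => by ext i; exact absurd i.isLt (by omega)⟩
    have h1 : wnext - wstar = 0 := Subsingleton.elim _ _
    have h2 : wt - wstar = 0 := Subsingleton.elim _ _
    rw [h1, h2, norm_zero]
    simp
  haveI : Nonempty (Fin d) := ⟨⟨0, hd⟩⟩
  set σm := sMin hHt.1 with hσmdef
  set σM := sMax hHt.1 with hσMdef
  set Δ := wt - wstar with hΔdef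
  -- basic eigenvalue facts for H := Hess wt
  have hH : (Hess wt).IsHermitian := hHt.1
  have hσm_le : ∀ i, σm ≤ hHt.1.eigenvalues i := fun i =>
    ciInf_le (Set.Finite.bddBelow (Set.finite_range _)) i
  have hσM_ge : ∀ i, hHt.1.eigenvalues i ≤ σM := fun i =>
    le_ciSup (Set.Finite.bddAbove (Set.finite_range _)) i
  have hσm_pos : 0 < σm := by
    obtain ⟨i0, hi0⟩ := Finite.exists_min hHt.1.eigenvalues
    have h2 : hHt.1.eigenvalues i0 ≤ σm := le_ciInf hi0
    have h3 := hHt.eigenvalues_pos i0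
    linarith
  have hσM_pos : 0 < σM := by
    have i := Classical.arbitrary (Fin d)
    exact lt_of_lt_of_le hσm_pos ((hσm_le i).trans (hσM_ge i))
  -- positivity of m
  have hm : 0 < m := by
    rcases Nat.eq_zero_or_pos m with h0 | h
    · exfalso
      have hH0 : Hess wt = 0 := by
        rw [← havg]
        subst h0
        simp
      have hne : (Pi.single (⟨0, hd⟩ : Fin d) (1:ℝ) : Fin d → ℝ) ≠ 0 := by
        intro hcon
        have := congrFun hcon ⟨0, hd⟩
        simp at this
      have := hHt.dotProduct_mulVec_pos hne
      rw [hH0] at this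
      simp at this
    · exact h
  -- nonnegativity of L
  have hL0 : 0 ≤ L := by
    set u := EuclideanSpace.single (⟨0, hd⟩ : Fin d) (1:ℝ) with hu
    have hu1 : ‖u‖ = 1 := by rw [hu, EuclideanSpace.norm_single]; norm_num
    have h := hLip wt (wt + u) u
    have hw : ‖wt - (wt + u)‖ = 1 := by
      rw [show wt - (wt + u) = -u by abel, norm_neg, hu1]
    rw [hw, hu1] at h
    have := norm_nonneg (Matrix.toEuclideanLin (Hess wt - Hess (wt + u)) u)
    linarith
  -- gradient vanishes at the minimizer
  have hgrad0 : gradient F wstar = 0 := by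
    have hloc : IsLocalMin F wstar := Filter.Eventually.of_forall hmin
    have h0 : fderiv ℝ F wstar = 0 := hloc.fderiv_eq_zero
    show (InnerProductSpace.toDual ℝ _).symm (fderiv ℝ F wstar) = 0
    rw [h0, map_zero]
  -- Taylor remainder
  set r := gradient F wt - Matrix.toEuclideanLin (Hess wt) Δ with hrdef
  have hr : ‖r‖ ≤ L / 2 * ‖Δ‖ ^ 2 :=
    taylor_bound F hF hL0 Hess hHess hLip wstar wt hgrad0
  -- the positive square root S of Hess wt
  obtain ⟨S, hS, hSH⟩ := exists_sqrt_psd hHt.posSemidef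
  have hdetS : S.det ≠ 0 := by
    intro h
    have hdd : S.det * S.det = (Hess wt).det := by rw [← Matrix.det_mul, hSH]
    rw [h, mul_zero] at hdd
    exact hHt.det_pos.ne' hdd.symm
  have hdetSU : IsUnit S.det := isUnit_iff_ne_zero.mpr hdetS
  have hSinvS : S⁻¹ * S = 1 := Matrix.nonsing_inv_mul S hdetSU
  have hSSinv : S * S⁻¹ = 1 := Matrix.mul_nonsing_inv S hdetSU
  have hSinvH : S⁻¹.IsHermitian := hS.1.inv
  have hSinvinv : S⁻¹⁻¹ = S := Matrix.nonsing_inv_nonsing_inv S hdetSU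
  have hμ0 : ∀ i, 0 ≤ hS.1.eigenvalues i := hS.eigenvalues_nonneg
  have hμsq : ∀ i, σm ≤ hS.1.eigenvalues i ^ 2 ∧ hS.1.eigenvalues i ^ 2 ≤ σM := by
    intro i
    have hv1 : ‖hS.1.eigenvectorBasis i‖ = 1 := hS.1.eigenvectorBasis.orthonormal.1 i
    have hHv : Matrix.toEuclideanLin (Hess wt) (hS.1.eigenvectorBasis i)
        = (hS.1.eigenvalues i ^ 2) • hS.1.eigenvectorBasis i := by
      rw [← hSH, toEuclideanLin_mul, eigen_toEuclideanLin hS.1 i, _root_.map_smul,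
        eigen_toEuclideanLin hS.1 i, smul_smul, ← sq]
    have h1 := rayleigh_ge hH hσm_le (hS.1.eigenvectorBasis i)
    have h2 := rayleigh_le hH hσM_ge (hS.1.eigenvectorBasis i)
    rw [hHv, real_inner_smul_right, real_inner_self_eq_norm_sq, hv1] at h1 h2
    constructor <;> nlinarith
  have hμ_ge : ∀ i, Real.sqrt σm ≤ hS.1.eigenvalues i := by
    intro i
    have := Real.sqrt_le_sqrt (hμsq i).1
    rwa [Real.sqrt_sq (hμ0 i)] at this
  have hμ_le : ∀ i, hS.1.eigenvalues i ≤ Real.sqrt σM := by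
    intro i
    have := Real.sqrt_le_sqrt (hμsq i).2
    rwa [Real.sqrt_sq (hμ0 i)] at this
  have hsqσm_pos : 0 < Real.sqrt σm := Real.sqrt_pos.mpr hσm_pos
  have hSnorm : ∀ x, ‖Matrix.toEuclideanLin S x‖ ≤ Real.sqrt σM * ‖x‖ :=
    fun x => norm_le_of_eig hS.1 (Real.sqrt_nonneg _)
      (fun i => by rw [abs_of_nonneg (hμ0 i)]; exact hμ_le i) x
  have hSinv_norm : ∀ x, ‖Matrix.toEuclideanLin S⁻¹ x‖ ≤ (Real.sqrt σm)⁻¹ * ‖x‖ := by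
    intro x
    refine norm_toEuclideanLin_le hS.1.eigenvectorBasis _
      (fun i => (hS.1.eigenvalues i)⁻¹)
      (fun i => eigen_inv hS.1 hdetSU i (lt_of_lt_of_le hsqσm_pos (hμ_ge i)).ne')
      (by positivity) (fun i => ?_) x
    rw [abs_of_nonneg (inv_nonneg.mpr (hμ0 i))]
    exact inv_anti₀ hsqσm_pos (hμ_ge i)
  -- Hess wt - σm • 1 is PSD
  have hsmul1herm : ∀ c : ℝ, (c • (1 : Matrix (Fin d) (Fin d) ℝ)).IsHermitian := by
    intro c
    show (c • (1 : Matrix (Fin d) (Fin d) ℝ))ᴴ = _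
    rw [Matrix.conjTranspose_smul, Matrix.conjTranspose_one]
    simp
  have hHm1 : ((Hess wt) - σm • 1).PosSemidef := by
    refine posSemidef_of_inner (hH.sub (hsmul1herm σm)) fun x => ?_
    rw [map_sub, _root_.map_smul]
    simp only [LinearMap.sub_apply, LinearMap.smul_apply, toEuclideanLin_one',
      inner_sub_right, real_inner_smul_right, real_inner_self_eq_norm_sq]
    have := rayleigh_ge hH hσm_le x
    linarith
  -- norm bound for (Htil i)⁻¹
  have hHtinv_norm : ∀ i y, ‖Matrix.toEuclideanLin (Htil i)⁻¹ y‖ ≤ 2 / σm * ‖y‖ := by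
    intro i y
    have hpsd : ((Htil i) - ((1 - ε) * σm) • 1).PosSemidef := by
      have h2 := posSemidef_smul hHm1 (show (0:ℝ) ≤ 1 - ε by linarith)
      have h3 := (happrox i).1.add h2
      have heq : Htil i - (1 - ε) • Hess wt + (1 - ε) • (Hess wt - σm • 1)
          = Htil i - ((1 - ε) * σm) • 1 := by
        rw [smul_sub, smul_smul]
        abel
      rwa [heq] at h3
    have heig : ∀ j, (1 - ε) * σm ≤ (hHtilPD i).1.eigenvalues j := fun j =>
      eig_ge_of_posSemidef (hHtilPD i).1 hpsd j
    have heigpos : ∀ j, 0 < (hHtilPD i).1.eigenvalues j := (hHtilPD i).eigenvalues_pos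
    have hdet : IsUnit (Htil i).det := isUnit_iff_ne_zero.mpr (hHtilPD i).det_pos.ne'
    refine norm_toEuclideanLin_le (hHtilPD i).1.eigenvectorBasis _
      (fun j => ((hHtilPD i).1.eigenvalues j)⁻¹)
      (fun j => eigen_inv (hHtilPD i).1 hdet j (heigpos j).ne')
      (by positivity) (fun j => ?_) y
    show |((hHtilPD i).1.eigenvalues j)⁻¹| ≤ 2 / σm
    rw [abs_of_nonneg (inv_nonneg.mpr (heigpos j).le)]
    have hge : σm / 2 ≤ (hHtilPD i).1.eigenvalues j := by nlinarith [heig j]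
    calc ((hHtilPD i).1.eigenvalues j)⁻¹ ≤ (σm / 2)⁻¹ := inv_anti₀ (by positivity) hge
      _ = 2 / σm := by rw [inv_div]
  -- the conjugated matrices T i
  set T : Fin m → Matrix (Fin d) (Fin d) ℝ := fun i => S⁻¹ * Htil i * S⁻¹ with hTdef
  have hTpsd : ∀ i, (T i).PosSemidef := by
    intro i
    have h1 := (hHtilPD i).posSemidef.mul_mul_conjTranspose_same S⁻¹
    rwa [show S⁻¹ᴴ = S⁻¹ from hSinvH] at h1
  have hSinvHSinv : S⁻¹ * Hess wt * S⁻¹ = 1 := by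
    rw [← hSH]
    have h1 : S⁻¹ * (S * S) * S⁻¹ = S⁻¹ * (S * (S * S⁻¹)) := by
      simp only [Matrix.mul_assoc]
    rw [h1, hSSinv, Matrix.mul_one, hSinvS]
  have hconjeq : ∀ (c : ℝ) i, S⁻¹ * (Htil i - c • Hess wt) * S⁻¹ = T i - c • 1 := by
    intro c i
    rw [Matrix.mul_sub, Matrix.sub_mul, Matrix.mul_smul, Matrix.smul_mul, hSinvHSinv, hTdef]
  have hconjeq' : ∀ (c : ℝ) i, S⁻¹ * (c • Hess wt - Htil i) * S⁻¹ = c • 1 - T i := by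
    intro c i
    rw [Matrix.mul_sub, Matrix.sub_mul, Matrix.mul_smul, Matrix.smul_mul, hSinvHSinv, hTdef]
  have hlamlow : ∀ i j, 1 - ε ≤ (hTpsd i).1.eigenvalues j := by
    intro i j
    have hconj := (happrox i).1.mul_mul_conjTranspose_same S⁻¹
    rw [show S⁻¹ᴴ = S⁻¹ from hSinvH, hconjeq (1 - ε) i] at hconj
    exact eig_ge_of_posSemidef (hTpsd i).1 hconj j
  have hlamhigh : ∀ i j, (hTpsd i).1.eigenvalues j ≤ 1 + ε := by
    intro i j
    have hconj := (happrox i).2.mul_mul_conjTranspose_same S⁻¹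
    rw [show S⁻¹ᴴ = S⁻¹ from hSinvH, hconjeq' (1 + ε) i] at hconj
    exact eig_le_of_posSemidef (hTpsd i).1 hconj j
  have hdetT : ∀ i, IsUnit (T i).det := by
    intro i
    have h1 : (S⁻¹).det * S.det = 1 := by rw [← Matrix.det_mul, hSinvS, Matrix.det_one]
    have h2 : (S⁻¹).det ≠ 0 := by
      intro h
      rw [h, zero_mul] at h1
      exact zero_ne_one h1
    apply isUnit_iff_ne_zero.mpr
    rw [hTdef]
    simp only [Matrix.det_mul]
    exact mul_ne_zero (mul_ne_zero h2 (hHtilPD i).det_pos.ne') h2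
  -- norm bound for M i := (T i)⁻¹ + T i - 2 • 1
  have hMnorm : ∀ i z, ‖Matrix.toEuclideanLin ((T i)⁻¹ + T i - (2:ℝ) • 1) z‖
      ≤ 2 * ε ^ 2 * ‖z‖ := by
    intro i z
    have hlam_pos : ∀ j, 0 < (hTpsd i).1.eigenvalues j := fun j =>
      lt_of_lt_of_le (by linarith) (hlamlow i j)
    refine norm_toEuclideanLin_le (hTpsd i).1.eigenvectorBasis _
      (fun j => ((hTpsd i).1.eigenvalues j)⁻¹ + (hTpsd i).1.eigenvalues j - 2)
      (fun j => ?_) (by positivity) (fun j => ?_) z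
    · have e1 := eigen_inv (hTpsd i).1 (hdetT i) j (hlam_pos j).ne'
      have e2 := eigen_toEuclideanLin (hTpsd i).1 j
      rw [map_sub, map_add, _root_.map_smul]
      simp only [LinearMap.sub_apply, LinearMap.add_apply, LinearMap.smul_apply,
        toEuclideanLin_one', e1, e2]
      module
    · show |((hTpsd i).1.eigenvalues j)⁻¹ + (hTpsd i).1.eigenvalues j - 2| ≤ 2 * ε ^ 2
      set t := (hTpsd i).1.eigenvalues j with htdef
      have h1 : 1 - ε ≤ t := hlamlow i j
      have h2 : t ≤ 1 + ε := hlamhigh i j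
      have ht : 0 < t := hlam_pos j
      have hv : t⁻¹ + t - 2 = (t - 1) ^ 2 / t := by
        field_simp
        ring
      rw [hv, abs_of_nonneg (by positivity)]
      have hsq : (t - 1) ^ 2 ≤ ε ^ 2 := by nlinarith
      rw [div_le_iff₀ ht]
      nlinarith
  -- averaging identity for T
  have hT1 : ((1:ℝ) / m) • ∑ i, T i = 1 := by
    have hsum : ∑ i, T i = S⁻¹ * (∑ i, Htil i) * S⁻¹ := by
      rw [Finset.mul_sum, Finset.sum_mul]
    have hpull : ((1:ℝ) / m) • (S⁻¹ * (∑ i, Htil i) * S⁻¹)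
        = S⁻¹ * (((1:ℝ) / m) • ∑ i, Htil i) * S⁻¹ := by
      rw [Matrix.mul_smul, Matrix.smul_mul]
    rw [hsum, hpull, havg, hSinvHSinv]
  -- the averaged inverse matrix P
  set P : Matrix (Fin d) (Fin d) ℝ := ((1:ℝ) / m) • ∑ i, (Htil i)⁻¹ with hPdef
  have hTinv : ∀ i, (T i)⁻¹ = S * (Htil i)⁻¹ * S := by
    intro i
    rw [hTdef]
    show (S⁻¹ * Htil i * S⁻¹)⁻¹ = _
    rw [Matrix.mul_inv_rev, Matrix.mul_inv_rev, hSinvinv, Matrix.mul_assoc]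
  have hSPS : S * P * S = ((1:ℝ) / m) • ∑ i, (T i)⁻¹ := by
    rw [hPdef, Matrix.mul_smul, Matrix.smul_mul, Finset.mul_sum, Finset.sum_mul]
    congr 1
    refine Finset.sum_congr rfl fun i _ => ?_
    rw [hTinv i]
  have hN : (1 : Matrix (Fin d) (Fin d) ℝ) - S * P * S
      = -(((1:ℝ) / m) • ∑ i, ((T i)⁻¹ + T i - (2:ℝ) • 1)) := by
    have hsplit : ((1:ℝ) / m) • ∑ i, ((T i)⁻¹ + T i - (2:ℝ) • 1)
        = ((1:ℝ) / m) • ∑ i, (T i)⁻¹ + ((1:ℝ) / m) • ∑ i, T i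
          - ((1:ℝ) / m) • ∑ _i : Fin m, ((2:ℝ) • (1 : Matrix (Fin d) (Fin d) ℝ)) := by
      rw [← smul_add, ← smul_sub]
      congr 1
      rw [← Finset.sum_add_distrib, ← Finset.sum_sub_distrib]
    have hconst : ((1:ℝ) / m) • ∑ _i : Fin m, ((2:ℝ) • (1 : Matrix (Fin d) (Fin d) ℝ))
        = (2:ℝ) • (1 : Matrix (Fin d) (Fin d) ℝ) := by
      rw [Finset.sum_const, Finset.card_univ, Fintype.card_fin,
        ← Nat.cast_smul_eq_nsmul ℝ, smul_smul]
      have hmne : (m:ℝ) ≠ 0 := by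
        exact_mod_cast hm.ne'
      rw [show (1:ℝ) / m * m = 1 by field_simp, one_smul]
    rw [hsplit, hconst, ← hSPS, hT1]
    module
  have hPHN : (1 : Matrix (Fin d) (Fin d) ℝ) - P * Hess wt
      = S⁻¹ * ((1 : Matrix (Fin d) (Fin d) ℝ) - S * P * S) * S := by
    have expand : S⁻¹ * ((1 : Matrix (Fin d) (Fin d) ℝ) - S * P * S) * S
        = S⁻¹ * S - S⁻¹ * (S * P * S) * S := by
      rw [Matrix.mul_sub, Matrix.sub_mul, Matrix.mul_one]
    rw [expand, hSinvS]
    congr 1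
    symm
    calc S⁻¹ * (S * P * S) * S = (S⁻¹ * S) * (P * (S * S)) := by
          simp only [Matrix.mul_assoc]
      _ = P * Hess wt := by rw [hSinvS, Matrix.one_mul, hSH]
  have hNnorm : ∀ z, ‖Matrix.toEuclideanLin
      ((1 : Matrix (Fin d) (Fin d) ℝ) - S * P * S) z‖ ≤ 2 * ε ^ 2 * ‖z‖ := by
    intro z
    rw [hN, map_neg, _root_.map_smul, map_sum]
    rw [LinearMap.neg_apply, norm_neg, LinearMap.smul_apply, LinearMap.sum_apply]
    exact norm_avg_le hm _ (fun i => hMnorm i z)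
  -- bound on the first error term
  have hterm1 : ‖Matrix.toEuclideanLin ((1 : Matrix (Fin d) (Fin d) ℝ) - P * Hess wt) Δ‖
      ≤ 2 * ε ^ 2 * Real.sqrt (σM / σm) * ‖Δ‖ := by
    rw [hPHN, toEuclideanLin_mul, toEuclideanLin_mul]
    calc ‖Matrix.toEuclideanLin S⁻¹ (Matrix.toEuclideanLin (1 - S * P * S)
            (Matrix.toEuclideanLin S Δ))‖
        ≤ (Real.sqrt σm)⁻¹ * ‖Matrix.toEuclideanLin (1 - S * P * S)
            (Matrix.toEuclideanLin S Δ)‖ := hSinv_norm _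
      _ ≤ (Real.sqrt σm)⁻¹ * (2 * ε ^ 2 * ‖Matrix.toEuclideanLin S Δ‖) := by
          have h := hNnorm (Matrix.toEuclideanLin S Δ)
          have h0 : (0:ℝ) ≤ (Real.sqrt σm)⁻¹ := by positivity
          exact mul_le_mul_of_nonneg_left h h0
      _ ≤ (Real.sqrt σm)⁻¹ * (2 * ε ^ 2 * (Real.sqrt σM * ‖Δ‖)) := by
          have h := hSnorm Δ
          have h0 : (0:ℝ) ≤ (Real.sqrt σm)⁻¹ := by positivity
          have h1 : (0:ℝ) ≤ 2 * ε ^ 2 := by positivity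
          exact mul_le_mul_of_nonneg_left (mul_le_mul_of_nonneg_left h h1) h0
      _ = 2 * ε ^ 2 * (Real.sqrt σM / Real.sqrt σm) * ‖Δ‖ := by ring
      _ = 2 * ε ^ 2 * Real.sqrt (σM / σm) * ‖Δ‖ := by
          rw [Real.sqrt_div hσM_pos.le]
  -- bound on the second error term
  have hterm2 : ‖Matrix.toEuclideanLin P r‖ ≤ L / σm * ‖Δ‖ ^ 2 := by
    have h1 : Matrix.toEuclideanLin P r
        = ((1:ℝ) / m) • ∑ i, Matrix.toEuclideanLin (Htil i)⁻¹ r := by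
      rw [hPdef, _root_.map_smul, map_sum]
      rw [LinearMap.smul_apply, LinearMap.sum_apply]
    rw [h1]
    have h2 : ∀ i, ‖Matrix.toEuclideanLin (Htil i)⁻¹ r‖ ≤ 2 / σm * (L / 2 * ‖Δ‖ ^ 2) :=
      fun i => (hHtinv_norm i r).trans (mul_le_mul_of_nonneg_left hr (by positivity))
    refine (norm_avg_le hm _ h2).trans (le_of_eq ?_)
    field_simp
  -- the decomposition of the Newton step
  have hdecomp : wnext - wstar
      = Matrix.toEuclideanLin ((1 : Matrix (Fin d) (Fin d) ℝ) - P * Hess wt) Δ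
        - Matrix.toEuclideanLin P r := by
    rw [hupdate]
    have hg : gradient F wt = Matrix.toEuclideanLin (Hess wt) Δ + r := by
      rw [hrdef]
      abel
    have hPapp : ((1:ℝ) / m) • ∑ i, Matrix.toEuclideanLin (Htil i)⁻¹ (gradient F wt)
        = Matrix.toEuclideanLin P (gradient F wt) := by
      rw [hPdef, _root_.map_smul, map_sum]
      rw [LinearMap.smul_apply, LinearMap.sum_apply]
    rw [hPapp, hg, map_add, ← toEuclideanLin_mul]
    have hone : Matrix.toEuclideanLin ((1 : Matrix (Fin d) (Fin d) ℝ) - P * Hess wt) Δ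
        = Δ - Matrix.toEuclideanLin (P * Hess wt) Δ := by
      have e : Matrix.toEuclideanLin ((1 : Matrix (Fin d) (Fin d) ℝ) - P * Hess wt)
          = Matrix.toEuclideanLin (1 : Matrix (Fin d) (Fin d) ℝ)
            - Matrix.toEuclideanLin (P * Hess wt) := map_sub _ _ _
      rw [e, LinearMap.sub_apply, toEuclideanLin_one']
    rw [hone, hΔdef]
    abel
  -- final assembly
  rw [hdecomp]
  have hfinal := norm_sub_le
    (Matrix.toEuclideanLin ((1 : Matrix (Fin d) (Fin d) ℝ) - P * Hess wt) Δ)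
    (Matrix.toEuclideanLin P r)
  have hmid := hfinal.trans (add_le_add hterm1 hterm2)
  refine hmid.trans ?_
  have hpos : 0 ≤ ε ^ 2 * Real.sqrt (σM / σm) * ‖Δ‖ := by positivity
  nlinarith [hpos]
end
end

section
/- Let H and H̃ be d×d symmetric positive definite real matrices with (1−ε)H ⪯ H̃ ⪯ (1+ε)H for some ε ∈ (0, 1), and let g ∈ ℝ^d. Define the quadratic auxiliary function φ(p) = pᵀHp − 2pᵀg, and let p* = H⁻¹g (its minimizer) and p̃ = H̃⁻¹g. Then min_p φ(p) ≤ φ(p̃) ≤ (1 − α²)·min_p φ(p), where α = ε/(1−ε). -/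
open Matrix
open scoped MatrixOrder

noncomputable section

private lemma and_dot_nonneg' {d : ℕ} {M : Matrix (Fin d) (Fin d) ℝ} (hM : M.PosSemidef)
    (x : Fin d → ℝ) : 0 ≤ x ⬝ᵥ (M *ᵥ x) := by simpa using hM.dotProduct_mulVec_nonneg x

private lemma and_dot_self_nonneg {d : ℕ} (x : Fin d → ℝ) : 0 ≤ x ⬝ᵥ x := by
  simpa using dotProduct_self_star_nonneg x

private lemma and_symm_dot {d : ℕ} {A : Matrix (Fin d) (Fin d) ℝ} (hA : Aᵀ = A)
    (x y : Fin d → ℝ) : x ⬝ᵥ (A *ᵥ y) = (A *ᵥ x) ⬝ᵥ y := by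
  rw [Matrix.dotProduct_mulVec, ← Matrix.mulVec_transpose, hA]

private lemma and_herm_transpose {d : ℕ} {A : Matrix (Fin d) (Fin d) ℝ}
    (hA : A.IsHermitian) : Aᵀ = A := by
  ext i j
  simpa [Matrix.conjTranspose_apply] using congrFun (congrFun hA i) j

private lemma and_real_conjTranspose {d : ℕ} (A : Matrix (Fin d) (Fin d) ℝ) : Aᴴ = Aᵀ := by
  ext i j
  simp [Matrix.conjTranspose_apply]

/-- the Approximate Newton Direction lemma. If `H̃` is an `ε`-spectral
approximation of `H`, then the approximate Newton direction `p̃ = H̃⁻¹g` nearly minimizes the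
quadratic auxiliary function `φ(p) = pᵀHp − 2pᵀg`, whose minimizer is `p* = H⁻¹g`. -/
theorem approximate_newton_direction {d : ℕ}
    (H Htil : Matrix (Fin d) (Fin d) ℝ) (hH : H.PosDef) (hHtil : Htil.PosDef)
    (ε : ℝ) (hε : 0 < ε ∧ ε < 1)
    (happrox : (Htil - (1 - ε) • H).PosSemidef ∧ ((1 + ε) • H - Htil).PosSemidef)
    (g : Fin d → ℝ) :
    let φ : (Fin d → ℝ) → ℝ := fun p => p ⬝ᵥ (H *ᵥ p) - 2 * (p ⬝ᵥ g)
    let pstar : Fin d → ℝ := H⁻¹ *ᵥ g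
    let ptil : Fin d → ℝ := Htil⁻¹ *ᵥ g
    let α : ℝ := ε / (1 - ε)
    (∀ p, φ pstar ≤ φ p) ∧ φ pstar ≤ φ ptil ∧ φ ptil ≤ (1 - α ^ 2) * φ pstar := by
  obtain ⟨hε0, hε1⟩ := hε
  obtain ⟨hap1, hap2⟩ := happrox
  intro φ pstar ptil α
  have h1ε : (0:ℝ) < 1 - ε := by linarith
  -- invertibility of H and Htil
  have hHdet : IsUnit H.det := isUnit_iff_ne_zero.mpr hH.det_pos.ne'
  have hHtdet : IsUnit Htil.det := isUnit_iff_ne_zero.mpr hHtil.det_pos.ne'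
  have hHinv : H * H⁻¹ = 1 := Matrix.mul_nonsing_inv _ hHdet
  have hHinv' : H⁻¹ * H = 1 := Matrix.nonsing_inv_mul _ hHdet
  have hHtinv : Htil * Htil⁻¹ = 1 := Matrix.mul_nonsing_inv _ hHtdet
  have hHp : H *ᵥ pstar = g := by
    show H *ᵥ (H⁻¹ *ᵥ g) = g
    rw [Matrix.mulVec_mulVec, hHinv, Matrix.one_mulVec]
  have hHtp : Htil *ᵥ ptil = g := by
    show Htil *ᵥ (Htil⁻¹ *ᵥ g) = g
    rw [Matrix.mulVec_mulVec, hHtinv, Matrix.one_mulVec]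
  have hHtr : Hᵀ = H := and_herm_transpose hH.1
  -- square root of H
  set S := CFC.sqrt H with hSdef
  have hSS : S * S = H := CFC.sqrt_mul_sqrt_self H hH.posSemidef.nonneg
  have hSher : Sᵀ = S := and_herm_transpose (CFC.sqrt_nonneg H).posSemidef.1
  have hSdet : IsUnit S.det := by
    have : S.det * S.det = H.det := by rw [← Matrix.det_mul, hSS]
    refine isUnit_iff_ne_zero.mpr fun h => ?_
    rw [h, mul_zero] at this
    exact hH.det_pos.ne' this.symm
  have hSi : S * S⁻¹ = 1 := Matrix.mul_nonsing_inv _ hSdet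
  have hSi' : S⁻¹ * S = 1 := Matrix.nonsing_inv_mul _ hSdet
  have hSitr : S⁻¹ᵀ = S⁻¹ := by rw [Matrix.transpose_nonsing_inv, hSher]
  have hHinv_eq : H⁻¹ = S⁻¹ * S⁻¹ := by rw [← hSS, Matrix.mul_inv_rev]
  have hSinvH : S⁻¹ * H = S := by rw [← hSS, ← Matrix.mul_assoc, hSi', Matrix.one_mul]
  have hSinvHS : S⁻¹ * H * S⁻¹ = 1 := by rw [hSinvH, hSi]
  -- conjugated matrices
  set B := S⁻¹ * (Htil - (1 - ε) • H) * S⁻¹ with hBdef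
  set C := S⁻¹ * ((1 + ε) • H - Htil) * S⁻¹ with hCdef
  have hSih : (S⁻¹)ᴴ = S⁻¹ := by rw [and_real_conjTranspose, hSitr]
  have hB : B.PosSemidef := by
    have := hap1.mul_mul_conjTranspose_same S⁻¹
    rwa [hSih] at this
  have hC : C.PosSemidef := by
    have := hap2.mul_mul_conjTranspose_same S⁻¹
    rwa [hSih] at this
  have hBtr : Bᵀ = B := and_herm_transpose hB.1
  have hBC : B + C = (2 * ε) • 1 := by
    have : B + C = S⁻¹ * ((Htil - (1 - ε) • H) + ((1 + ε) • H - Htil)) * S⁻¹ := by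
      rw [Matrix.mul_add, Matrix.add_mul]
    rw [this]
    have h2 : (Htil - (1 - ε) • H) + ((1 + ε) • H - Htil) = (2 * ε) • H := by
      module
    rw [h2, Matrix.mul_smul, Matrix.smul_mul, hSinvHS]
  -- the vector w and companions
  obtain ⟨w, hwdef⟩ : ∃ w : Fin d → ℝ, w = S *ᵥ ptil := ⟨_, rfl⟩
  obtain ⟨u, hudef⟩ : ∃ u : Fin d → ℝ, u = S⁻¹ *ᵥ ((H - Htil) *ᵥ ptil) := ⟨_, rfl⟩
  obtain ⟨z, hzdef⟩ : ∃ z : Fin d → ℝ, z = S⁻¹ *ᵥ g := ⟨_, rfl⟩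
  -- u = ε • w - B w
  have hu : u = ε • w - B *ᵥ w := by
    have hBw : B *ᵥ w = S⁻¹ *ᵥ ((Htil - (1 - ε) • H) *ᵥ ptil) := by
      rw [hwdef, Matrix.mulVec_mulVec, hBdef, Matrix.mul_assoc, hSi', Matrix.mul_one,
        ← Matrix.mulVec_mulVec]
    have hεw : ε • w = S⁻¹ *ᵥ (ε • (H *ᵥ ptil)) := by
      rw [Matrix.mulVec_smul, Matrix.mulVec_mulVec, hSinvH, hwdef]
    have hvec : (H - Htil) *ᵥ ptil = ε • (H *ᵥ ptil) - ((Htil - (1 - ε) • H) *ᵥ ptil) := by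
      simp only [Matrix.sub_mulVec, Matrix.smul_mulVec]
      module
    rw [hudef, hBw, hεw, ← Matrix.mulVec_sub, hvec]
  -- z = (1-ε) • w + B w
  have hz : z = (1 - ε) • w + B *ᵥ w := by
    have hBw : B *ᵥ w = S⁻¹ *ᵥ ((Htil - (1 - ε) • H) *ᵥ ptil) := by
      rw [hwdef, Matrix.mulVec_mulVec, hBdef, Matrix.mul_assoc, hSi', Matrix.mul_one,
        ← Matrix.mulVec_mulVec]
    have hεw : (1 - ε) • w = S⁻¹ *ᵥ ((1 - ε) • (H *ᵥ ptil)) := by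
      rw [Matrix.mulVec_smul, Matrix.mulVec_mulVec, hSinvH, hwdef]
    have hvec : Htil *ᵥ ptil = (1 - ε) • (H *ᵥ ptil) + ((Htil - (1 - ε) • H) *ᵥ ptil) := by
      simp only [Matrix.sub_mulVec, Matrix.smul_mulVec]
      module
    rw [hzdef, hBw, hεw, ← Matrix.mulVec_add, ← hHtp, hvec]
  -- scalar quantities
  obtain ⟨s, hsdef⟩ : ∃ s : ℝ, s = w ⬝ᵥ (B *ᵥ w) := ⟨_, rfl⟩
  obtain ⟨t, htdef⟩ : ∃ t : ℝ, t = (B *ᵥ w) ⬝ᵥ (B *ᵥ w) := ⟨_, rfl⟩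
  have hs : 0 ≤ s := hsdef ▸ and_dot_nonneg' hB w
  have ht : 0 ≤ t := htdef ▸ and_dot_self_nonneg _
  have hww : 0 ≤ w ⬝ᵥ w := and_dot_self_nonneg _
  -- t ≤ 2 ε s  via the square root of B
  obtain ⟨R, hRdef⟩ : ∃ R : Matrix (Fin d) (Fin d) ℝ, R = CFC.sqrt B := ⟨_, rfl⟩
  have hRR : R * R = B := hRdef ▸ CFC.sqrt_mul_sqrt_self B hB.nonneg
  have hRtr : Rᵀ = R := hRdef ▸ and_herm_transpose (CFC.sqrt_nonneg B).posSemidef.1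
  have hRBR : R * B * R = B * B := by
    rw [← hRR]
    simp only [Matrix.mul_assoc]
  have htle : t ≤ 2 * ε * s := by
    obtain ⟨y, hydef⟩ : ∃ y : Fin d → ℝ, y = R *ᵥ w := ⟨_, rfl⟩
    have hyy : y ⬝ᵥ y = s := by
      rw [hydef, ← and_symm_dot hRtr, Matrix.mulVec_mulVec, hRR, hsdef]
    have hyBy : y ⬝ᵥ (B *ᵥ y) = t := by
      rw [hydef, Matrix.mulVec_mulVec, ← and_symm_dot hRtr, Matrix.mulVec_mulVec,
        ← Matrix.mul_assoc, hRBR, ← Matrix.mulVec_mulVec, and_symm_dot hBtr, htdef]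
    have h0 : 0 ≤ y ⬝ᵥ (C *ᵥ y) := and_dot_nonneg' hC y
    have hCy : C *ᵥ y = (2 * ε) • y - B *ᵥ y := by
      have : C = (2 * ε) • 1 - B := by rw [← hBC]; abel
      rw [this, Matrix.sub_mulVec, Matrix.smul_mulVec, Matrix.one_mulVec]
    rw [hCy, dotProduct_sub, dotProduct_smul, hyy, hyBy, smul_eq_mul] at h0
    linarith
  -- expansions of u⬝u and z⬝z
  have huu : u ⬝ᵥ u = ε ^ 2 * (w ⬝ᵥ w) - 2 * ε * s + t := by
    rw [hu]
    simp only [dotProduct_sub, sub_dotProduct, smul_dotProduct, dotProduct_smul,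
      smul_eq_mul]
    rw [dotProduct_comm (B *ᵥ w) w, ← hsdef, ← htdef]
    ring
  have hzz : z ⬝ᵥ z = (1 - ε) ^ 2 * (w ⬝ᵥ w) + 2 * (1 - ε) * s + t := by
    rw [hz]
    simp only [dotProduct_add, add_dotProduct, smul_dotProduct, dotProduct_smul,
      smul_eq_mul]
    rw [dotProduct_comm (B *ᵥ w) w, ← hsdef, ← htdef]
    ring
  -- key quantities of the quadratic
  have hpstarg : pstar ⬝ᵥ g = z ⬝ᵥ z := by
    have : pstar = S⁻¹ *ᵥ z := by
      show H⁻¹ *ᵥ g = S⁻¹ *ᵥ z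
      rw [hzdef, Matrix.mulVec_mulVec, hHinv_eq]
    rw [this, ← and_symm_dot hSitr, hzdef]
  -- φ p - φ pstar = (p - pstar)ᵀ H (p - pstar)
  have hkey : ∀ p, (p - pstar) ⬝ᵥ (H *ᵥ (p - pstar)) = φ p - φ pstar := by
    intro p
    have h1 : pstar ⬝ᵥ (H *ᵥ p) = p ⬝ᵥ g := by
      rw [and_symm_dot hHtr, hHp, dotProduct_comm]
    have h2 : p ⬝ᵥ (H *ᵥ pstar) = p ⬝ᵥ g := by rw [hHp]
    have h3 : pstar ⬝ᵥ (H *ᵥ pstar) = pstar ⬝ᵥ g := by rw [hHp]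
    simp only [φ, Matrix.mulVec_sub, dotProduct_sub, sub_dotProduct, h1, h2, h3]
    ring
  have hmin : ∀ p, φ pstar ≤ φ p := by
    intro p
    have := and_dot_nonneg' hH.posSemidef (p - pstar)
    have hk := hkey p
    linarith
  refine ⟨hmin, hmin ptil, ?_⟩
  -- φ ptil = φ pstar + u⬝u
  have hΔ : ptil - pstar = S⁻¹ *ᵥ u := by
    have hHΔ : H *ᵥ (ptil - pstar) = (H - Htil) *ᵥ ptil := by
      rw [Matrix.mulVec_sub, hHp, Matrix.sub_mulVec, hHtp]
    have : ptil - pstar = H⁻¹ *ᵥ (H *ᵥ (ptil - pstar)) := by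
      rw [Matrix.mulVec_mulVec, hHinv', Matrix.one_mulVec]
    rw [this, hHΔ, hHinv_eq, ← Matrix.mulVec_mulVec, hudef]
  have hφtil : φ ptil - φ pstar = u ⬝ᵥ u := by
    rw [← hkey ptil]
    have hHΔ : H *ᵥ (ptil - pstar) = (H - Htil) *ᵥ ptil := by
      rw [Matrix.mulVec_sub, hHp, Matrix.sub_mulVec, hHtp]
    rw [hHΔ, hΔ, ← and_symm_dot hSitr, hudef]
  have hφstar : φ pstar = -(z ⬝ᵥ z) := by
    show pstar ⬝ᵥ (H *ᵥ pstar) - 2 * (pstar ⬝ᵥ g) = -(z ⬝ᵥ z)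
    rw [hHp, hpstarg]
    ring
  -- final inequality
  have hαε : α * (1 - ε) = ε := div_mul_cancel₀ _ h1ε.ne'
  have h1 : u ⬝ᵥ u ≤ ε ^ 2 * (w ⬝ᵥ w) := by rw [huu]; linarith
  have h2 : (1 - ε) ^ 2 * (w ⬝ᵥ w) ≤ z ⬝ᵥ z := by
    rw [hzz]; nlinarith
  have hα2 : α ^ 2 * ((1 - ε) ^ 2) = ε ^ 2 := by
    rw [← mul_pow, hαε]
  have hαnn : 0 ≤ α ^ 2 := sq_nonneg _
  have h3 : u ⬝ᵥ u ≤ α ^ 2 * (z ⬝ᵥ z) :=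
    calc u ⬝ᵥ u ≤ ε ^ 2 * (w ⬝ᵥ w) := h1
    _ = α ^ 2 * ((1 - ε) ^ 2 * (w ⬝ᵥ w)) := by rw [← mul_assoc, hα2]
    _ ≤ α ^ 2 * (z ⬝ᵥ z) := by
        exact mul_le_mul_of_nonneg_left h2 hαnn
  have : φ ptil = φ pstar + u ⬝ᵥ u := by linarith
  rw [this, hφstar]
  nlinarith [h3]
end
end

section
/- Let H and H̃ be d×d symmetric positive definite real matrices with (1−ε)H ⪯ H̃ ⪯ (1+ε)H for some ε ∈ (0, 1), and let g ∈ ℝ^d. Let p* = H⁻¹g and p̃ = H̃⁻¹g, and let H^{1/2} denote the positive semidefinite square root of H. Then ‖H^{1/2}(p̃ − p*)‖₂ ≤ (ε/(1−ε))·‖H^{1/2}p*‖₂. -/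
open Matrix

noncomputable section

/-- The positive semidefinite square root, as `Matrix.PosSemidef.sqrt` was defined in the older
Mathlib (removed since). -/
def Matrix.PosSemidef.sqrt {n : Type*} [Fintype n] [DecidableEq n]
    {A : Matrix n n ℝ} (hA : A.PosSemidef) : Matrix n n ℝ :=
  (hA.1.eigenvectorUnitary : Matrix n n ℝ) * diagonal ((√·) ∘ hA.1.eigenvalues) *
    (star hA.1.eigenvectorUnitary : Matrix n n ℝ)

private lemma sqrt_mul_self' {n : Type*} [Fintype n] [DecidableEq n]
    {A : Matrix n n ℝ} (hA : A.PosSemidef) : hA.sqrt * hA.sqrt = A := by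
  have hU : (star hA.1.eigenvectorUnitary : Matrix n n ℝ) * (hA.1.eigenvectorUnitary : Matrix n n ℝ) = 1 :=
    Unitary.coe_star_mul_self _
  have hD : diagonal ((√·) ∘ hA.1.eigenvalues) * diagonal ((√·) ∘ hA.1.eigenvalues)
      = diagonal (RCLike.ofReal ∘ hA.1.eigenvalues) := by
    rw [diagonal_mul_diagonal]
    congr 1
    funext i
    simp [Real.mul_self_sqrt (hA.eigenvalues_nonneg i)]
  conv_rhs => rw [hA.1.spectral_theorem, Unitary.conjStarAlgAut_apply]
  unfold Matrix.PosSemidef.sqrt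
  rw [← hD]
  simp only [Matrix.mul_assoc]
  rw [← Matrix.mul_assoc (star _ : Matrix n n ℝ) _ _, hU, Matrix.one_mul]

private lemma sqrt_transpose' {n : Type*} [Fintype n] [DecidableEq n]
    {A : Matrix n n ℝ} (hA : A.PosSemidef) : hA.sqrtᵀ = hA.sqrt := by
  unfold Matrix.PosSemidef.sqrt
  rw [transpose_mul, transpose_mul, diagonal_transpose, star_eq_conjTranspose,
    conjTranspose_eq_transpose_of_trivial, transpose_transpose, Matrix.mul_assoc]

private lemma expand_quad {d : ℕ} (N : Matrix (Fin d) (Fin d) ℝ) (t : ℝ) (x y : Fin d → ℝ) :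
    (t • x + y) ⬝ᵥ (N *ᵥ (t • x + y)) =
      t * t * (x ⬝ᵥ (N *ᵥ x)) + t * (x ⬝ᵥ (N *ᵥ y) + y ⬝ᵥ (N *ᵥ x)) + y ⬝ᵥ (N *ᵥ y) := by
  simp only [mulVec_add, mulVec_smul, dotProduct_add, add_dotProduct, smul_dotProduct,
    dotProduct_smul, smul_eq_mul]
  ring

private lemma expand_quad_sub {d : ℕ} (N : Matrix (Fin d) (Fin d) ℝ) (t : ℝ) (x y : Fin d → ℝ) :
    (t • x - y) ⬝ᵥ (N *ᵥ (t • x - y)) =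
      t * t * (x ⬝ᵥ (N *ᵥ x)) - t * (x ⬝ᵥ (N *ᵥ y) + y ⬝ᵥ (N *ᵥ x)) + y ⬝ᵥ (N *ᵥ y) := by
  simp only [mulVec_sub, mulVec_smul, dotProduct_sub, sub_dotProduct, smul_dotProduct,
    dotProduct_smul, smul_eq_mul]
  ring

private lemma symm_bilin {d : ℕ} {N : Matrix (Fin d) (Fin d) ℝ} (hN : N.IsHermitian)
    (x y : Fin d → ℝ) : x ⬝ᵥ (N *ᵥ y) = y ⬝ᵥ (N *ᵥ x) := by
  have hNT : Nᵀ = N := by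
    rw [← conjTranspose_eq_transpose_of_trivial]; exact hN
  rw [dotProduct_mulVec, ← mulVec_transpose, hNT, dotProduct_comm]

/-- if `H̃` is an `ε`-spectral approximation of `H`, then the approximate
Newton direction `p̃ = H̃⁻¹g` is close to `p* = H⁻¹g` in the `H`-weighted norm
`‖H^{1/2}·‖₂`. -/
theorem approximate_newton_direction_weighted_bound {d : ℕ}
    (H Htil : Matrix (Fin d) (Fin d) ℝ) (hH : H.PosDef) (hHtil : Htil.PosDef)
    (ε : ℝ) (hε : 0 < ε ∧ ε < 1)
    (happrox : (Htil - (1 - ε) • H).PosSemidef ∧ ((1 + ε) • H - Htil).PosSemidef)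
    (g : Fin d → ℝ) :
    norm2 (hH.posSemidef.sqrt *ᵥ (Htil⁻¹ *ᵥ g - H⁻¹ *ᵥ g)) ≤
      (ε / (1 - ε)) * norm2 (hH.posSemidef.sqrt *ᵥ (H⁻¹ *ᵥ g)) := by
  obtain ⟨hε0, hε1⟩ := hε
  obtain ⟨h1, h2⟩ := happrox
  have h1ε : (0:ℝ) < 1 - ε := by linarith
  set S := hH.posSemidef.sqrt with hSdef
  set p : Fin d → ℝ := H⁻¹ *ᵥ g with hp
  set q : Fin d → ℝ := Htil⁻¹ *ᵥ g with hq
  set Δ : Fin d → ℝ := q - p with hΔ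
  -- weighted norm squared identity
  have hSq : ∀ v : Fin d → ℝ, (S *ᵥ v) ⬝ᵥ (S *ᵥ v) = v ⬝ᵥ (H *ᵥ v) := by
    intro v
    have hS2 : S * S = H := sqrt_mul_self' hH.posSemidef
    have hSh : Sᵀ = S := by
      rw [← conjTranspose_eq_transpose_of_trivial]
      rw [conjTranspose_eq_transpose_of_trivial]; exact sqrt_transpose' _
    rw [dotProduct_mulVec, ← mulVec_transpose, hSh, mulVec_mulVec, hS2]
    exact dotProduct_comm _ _
  set a : ℝ := Δ ⬝ᵥ (H *ᵥ Δ) with ha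
  set b : ℝ := p ⬝ᵥ (H *ᵥ p) with hb
  have ha0 : 0 ≤ a := by simpa using hH.posSemidef.dotProduct_mulVec_nonneg Δ
  have hb0 : 0 ≤ b := by simpa using hH.posSemidef.dotProduct_mulVec_nonneg p
  have hgoal_lhs : norm2 (S *ᵥ Δ) = Real.sqrt a := by rw [norm2, hSq]
  have hgoal_rhs : norm2 (S *ᵥ p) = Real.sqrt b := by rw [norm2, hSq]
  rw [hgoal_lhs, hgoal_rhs]
  -- key identity: Htil *ᵥ Δ = (H - Htil) *ᵥ p
  have hHp : H *ᵥ p = g := by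
    rw [hp, mulVec_mulVec, mul_nonsing_inv _ (isUnit_iff_isUnit_det _ |>.1 hH.isUnit), one_mulVec]
  have hHtq : Htil *ᵥ q = g := by
    rw [hq, mulVec_mulVec, mul_nonsing_inv _ (isUnit_iff_isUnit_det _ |>.1 hHtil.isUnit), one_mulVec]
  have hkey : Htil *ᵥ Δ = (H - Htil) *ᵥ p := by
    rw [hΔ, mulVec_sub, hHtq, ← hHp, sub_mulVec]
  set M : Matrix (Fin d) (Fin d) ℝ := H - Htil with hM
  have hMherm : M.IsHermitian := hH.1.sub hHtil.1
  -- the two one-sided quadratic form bounds for M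
  have hMle : ∀ z : Fin d → ℝ, z ⬝ᵥ (M *ᵥ z) ≤ ε * (z ⬝ᵥ (H *ᵥ z)) := by
    intro z
    have := h1.dotProduct_mulVec_nonneg z
    simp only [star_trivial, sub_mulVec, smul_mulVec, dotProduct_sub, dotProduct_smul,
      smul_eq_mul] at this
    simp only [hM, sub_mulVec, dotProduct_sub]
    nlinarith
  have hMge : ∀ z : Fin d → ℝ, -(ε * (z ⬝ᵥ (H *ᵥ z))) ≤ z ⬝ᵥ (M *ᵥ z) := by
    intro z
    have := h2.dotProduct_mulVec_nonneg z
    simp only [star_trivial, sub_mulVec, smul_mulVec, dotProduct_sub, dotProduct_smul,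
      smul_eq_mul] at this
    simp only [hM, sub_mulVec, dotProduct_sub]
    nlinarith
  -- main chain start: (1-ε) a ≤ Δ ⬝ᵥ (Htil *ᵥ Δ) = Δ ⬝ᵥ (M *ᵥ p)
  have hchain : (1 - ε) * a ≤ Δ ⬝ᵥ (M *ᵥ p) := by
    have := h1.dotProduct_mulVec_nonneg Δ
    simp only [star_trivial, sub_mulVec, smul_mulVec, dotProduct_sub, dotProduct_smul,
      smul_eq_mul] at this
    have h3 : Δ ⬝ᵥ (Htil *ᵥ Δ) = Δ ⬝ᵥ (M *ᵥ p) := by rw [hkey, hM]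
    rw [← h3]; linarith
  rcases eq_or_lt_of_le ha0 with ha0' | hapos
  · rw [← ha0', Real.sqrt_zero]
    positivity
  rcases eq_or_lt_of_le hb0 with hb0' | hbpos
  · -- b = 0 ⇒ p = 0 ⇒ contradiction with a > 0
    exfalso
    have hp0 : p = 0 := by
      by_contra hne
      have := hH.dotProduct_mulVec_pos hne
      rw [star_trivial] at this
      rw [← hb] at this
      linarith
    have hz : Δ ⬝ᵥ (M *ᵥ p) = 0 := by rw [hp0, mulVec_zero, dotProduct_zero]
    nlinarith
  -- main case
  have hsa : (0:ℝ) < Real.sqrt a := Real.sqrt_pos.2 hapos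
  have hsb : (0:ℝ) < Real.sqrt b := Real.sqrt_pos.2 hbpos
  set t : ℝ := Real.sqrt b / Real.sqrt a with ht
  have htpos : 0 < t := div_pos hsb hsa
  have hta : t * t * a = b := by
    rw [ht, div_mul_div_comm, Real.mul_self_sqrt hb0, Real.mul_self_sqrt ha0,
      div_mul_cancel₀ _ hapos.ne']
  -- polarization bound
  have hpol : Δ ⬝ᵥ (M *ᵥ p) ≤ ε * Real.sqrt a * Real.sqrt b := by
    have hplus := hMle (t • Δ + p)
    have hminus := hMge (t • Δ - p)
    rw [expand_quad M t Δ p, expand_quad H t Δ p] at hplus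
    rw [expand_quad_sub M t Δ p, expand_quad_sub H t Δ p] at hminus
    have hsymm : p ⬝ᵥ (M *ᵥ Δ) = Δ ⬝ᵥ (M *ᵥ p) := symm_bilin hMherm p Δ
    have htsa : t * Real.sqrt a = Real.sqrt b := div_mul_cancel₀ _ hsa.ne'
    have hbb : Real.sqrt b * Real.sqrt b = b := Real.mul_self_sqrt hb0
    rw [← ha, ← hb, hsymm, hta] at hplus hminus
    have h4 : t * (Δ ⬝ᵥ (M *ᵥ p)) ≤ ε * b := by nlinarith [hplus, hminus]
    have hrhs : t * (ε * Real.sqrt a * Real.sqrt b) = ε * b := by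
      calc t * (ε * Real.sqrt a * Real.sqrt b)
          = ε * (t * Real.sqrt a * Real.sqrt b) := by ring
        _ = ε * (Real.sqrt b * Real.sqrt b) := by rw [htsa]
        _ = ε * b := by rw [hbb]
    exact le_of_mul_le_mul_left (by linarith) htpos
  -- conclude
  rw [div_mul_eq_mul_div, le_div_iff₀ h1ε]
  have haa : Real.sqrt a * Real.sqrt a = a := Real.mul_self_sqrt ha0
  nlinarith [hchain, hpol, hsa]
end
end

section
/- Let F : ℝ^d → ℝ be twice continuously differentiable with a minimizer w*, and suppose its Hessian ∇²F is L-Lipschitz in spectral norm. Fix w_t, let H_t = ∇²F(w_t) be symmetric positive definite, let g_t = ∇F(w_t), and define φ_t(p) = pᵀH_t p − 2pᵀg_t. Let α ∈ (0, 1) and suppose p̃_t satisfies φ_t(p̃_t) ≤ (1 − α²)·min_p φ_t(p). Set w_{t+1} = w_t − p̃_t and Δ_t = w_t − w*, Δ_{t+1} = w_{t+1} − w*. Then Δ_{t+1}ᵀ H_t Δ_{t+1} ≤ L·‖Δ_t‖₂²·‖Δ_{t+1}‖₂ + (α²/(1−α²))·Δ_tᵀ H_t Δ_t. -/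
open Matrix
open scoped RealInnerProductSpace

noncomputable section

/-- the Approximate Newton Step lemma. If a direction `p̃` nearly minimizes the
quadratic auxiliary function `φ_t(p) = pᵀH_t p − 2pᵀg_t` (within factor `1 − α²` of the
minimum), then the step `w_{t+1} = w_t − p̃` satisfies a linear-quadratic error recursion. -/
theorem approximate_newton_step {d : ℕ}
    (F : EuclideanSpace ℝ (Fin d) → ℝ) (hF : ContDiff ℝ 2 F)
    (wstar : EuclideanSpace ℝ (Fin d)) (hmin : ∀ w, F wstar ≤ F w)
    (L : ℝ)
    (Hess : EuclideanSpace ℝ (Fin d) → Matrix (Fin d) (Fin d) ℝ)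
    (hHess : ∀ w y, fderiv ℝ (gradient F) w y = Matrix.toEuclideanLin (Hess w) y)
    (hLip : ∀ w w' x, ‖Matrix.toEuclideanLin (Hess w - Hess w') x‖ ≤ L * ‖w - w'‖ * ‖x‖)
    (wt : EuclideanSpace ℝ (Fin d)) (hHt : (Hess wt).PosDef)
    (α : ℝ) (hα : 0 < α ∧ α < 1)
    (ptil : EuclideanSpace ℝ (Fin d))
    (hptil : ∀ p : EuclideanSpace ℝ (Fin d),
      ⟪ptil, Matrix.toEuclideanLin (Hess wt) ptil⟫ - 2 * ⟪ptil, gradient F wt⟫ ≤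
        (1 - α ^ 2) * (⟪p, Matrix.toEuclideanLin (Hess wt) p⟫ - 2 * ⟪p, gradient F wt⟫))
    (wnext : EuclideanSpace ℝ (Fin d)) (hupdate : wnext = wt - ptil) :
    ⟪wnext - wstar, Matrix.toEuclideanLin (Hess wt) (wnext - wstar)⟫ ≤
      L * ‖wt - wstar‖ ^ 2 * ‖wnext - wstar‖
        + (α ^ 2 / (1 - α ^ 2)) * ⟪wt - wstar, Matrix.toEuclideanLin (Hess wt) (wt - wstar)⟫ := by
  have hα2 : (0:ℝ) < 1 - α ^ 2 := by nlinarith [hα.1, hα.2]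
  set T := Matrix.toEuclideanLin (Hess wt) with hT
  set g := gradient F wt with hg
  set Δ := wt - wstar with hΔ
  set Δ' := wnext - wstar with hΔ'def
  have hΔ' : Δ' = Δ - ptil := by rw [hΔ'def, hupdate, hΔ]; abel
  have hsym : ∀ x y : EuclideanSpace ℝ (Fin d), ⟪T x, y⟫ = ⟪x, T y⟫ :=
    Matrix.isHermitian_iff_isSymmetric.1 hHt.1
  have hgrad : ContDiff ℝ 1 (gradient F) := by
    have h1 : ContDiff ℝ 1 (fderiv ℝ F) := hF.fderiv_right (by norm_num)
    exact ((InnerProductSpace.toDual ℝ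
      (EuclideanSpace ℝ (Fin d))).symm.toContinuousLinearEquiv.toContinuousLinearMap.contDiff).comp h1
  have hgdiff : Differentiable ℝ (gradient F) := hgrad.differentiable one_ne_zero
  have hg0 : gradient F wstar = 0 := by
    have h : IsLocalMin F wstar := Filter.Eventually.of_forall hmin
    simp [gradient, h.fderiv_eq_zero]
  set line : ℝ → EuclideanSpace ℝ (Fin d) := fun s => wstar + s • Δ with hlinedef
  have hline1 : line 1 = wt := by rw [hlinedef]; simp [hΔ]
  have hline0 : line 0 = wstar := by rw [hlinedef]; simp
  have hlinecont : Continuous line :=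
    continuous_const.add (continuous_id.smul continuous_const)
  have hψ : ∀ s : ℝ, HasDerivAt (fun s => ⟪Δ', gradient F (line s)⟫)
      (⟪Δ', fderiv ℝ (gradient F) (line s) Δ⟫) s := by
    intro s
    have h1 : HasDerivAt line Δ s := by
      have h := ((hasDerivAt_id' s).smul_const Δ).const_add wstar
      rw [one_smul] at h
      exact h
    have h2 : HasDerivAt (fun s => gradient F (line s))
        (fderiv ℝ (gradient F) (line s) Δ) s :=
      (hgdiff (line s)).hasFDerivAt.comp_hasDerivAt s h1
    simpa using (hasDerivAt_const s Δ').inner ℝ h2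
  have hcont : Continuous fun s => ⟪Δ', fderiv ℝ (gradient F) (line s) Δ⟫ := by
    have hfd : Continuous fun s => fderiv ℝ (gradient F) (line s) Δ :=
      (ContinuousLinearMap.apply ℝ (EuclideanSpace ℝ (Fin d)) Δ).continuous.comp
        ((hgrad.continuous_fderiv one_ne_zero).comp hlinecont)
    exact continuous_const.inner hfd
  have hFTC : ⟪Δ', g⟫ = ∫ s in (0:ℝ)..1, ⟪Δ', fderiv ℝ (gradient F) (line s) Δ⟫ := by
    have h := intervalIntegral.integral_eq_sub_of_hasDerivAt
      (f := fun s => ⟪Δ', gradient F (line s)⟫)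
      (fun s _ => hψ s) (hcont.intervalIntegrable 0 1)
    rw [h]
    simp only [hline0, hline1, hg0, inner_zero_right, sub_zero, hg]
  have hbound : |⟪Δ', g⟫ - ⟪Δ', T Δ⟫| ≤ L / 2 * ‖Δ‖ ^ 2 * ‖Δ'‖ := by
    have hTΔ : (⟪Δ', T Δ⟫ : ℝ) = ∫ s in (0:ℝ)..1, ⟪Δ', T Δ⟫ := by simp
    have heq : ⟪Δ', g⟫ - ⟪Δ', T Δ⟫
        = ∫ s in (0:ℝ)..1, (⟪Δ', fderiv ℝ (gradient F) (line s) Δ⟫ - ⟪Δ', T Δ⟫) := by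
      rw [intervalIntegral.integral_sub (hcont.intervalIntegrable 0 1)
        intervalIntegrable_const, ← hTΔ, ← hFTC]
    rw [heq]
    have hb : ∀ s ∈ Set.Icc (0:ℝ) 1,
        ‖⟪Δ', fderiv ℝ (gradient F) (line s) Δ⟫ - ⟪Δ', T Δ⟫‖
          ≤ (L * ‖Δ‖ * ‖Δ‖ * ‖Δ'‖) * (1 - s) := by
      intro s hs
      have h1 : ⟪Δ', fderiv ℝ (gradient F) (line s) Δ⟫ - ⟪Δ', T Δ⟫
          = ⟪Δ', Matrix.toEuclideanLin (Hess (line s) - Hess wt) Δ⟫ := by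
        simp only [hHess, hT, map_sub, LinearMap.sub_apply, inner_sub_right]
      have h2 : ‖line s - wt‖ = (1 - s) * ‖Δ‖ := by
        have h3 : line s - wt = -((1 - s) • Δ) := by
          rw [hlinedef]
          show wstar + s • Δ - wt = -((1 - s) • Δ)
          rw [hΔ]
          simp only [sub_smul, one_smul, smul_sub]
          abel
        rw [h3, norm_neg, norm_smul, Real.norm_eq_abs,
          abs_of_nonneg (by linarith [hs.2])]
      rw [h1]
      calc ‖(⟪Δ', Matrix.toEuclideanLin (Hess (line s) - Hess wt) Δ⟫ : ℝ)‖
          ≤ ‖Δ'‖ * ‖Matrix.toEuclideanLin (Hess (line s) - Hess wt) Δ‖ :=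
            norm_inner_le_norm _ _
        _ ≤ ‖Δ'‖ * (L * ‖line s - wt‖ * ‖Δ‖) :=
            mul_le_mul_of_nonneg_left (hLip _ _ _) (norm_nonneg _)
        _ = (L * ‖Δ‖ * ‖Δ‖ * ‖Δ'‖) * (1 - s) := by rw [h2]; ring
    have hbint : IntervalIntegrable
        (fun s => (L * ‖Δ‖ * ‖Δ‖ * ‖Δ'‖) * (1 - s)) MeasureTheory.volume 0 1 :=
      (continuous_const.mul (continuous_const.sub continuous_id)).intervalIntegrable 0 1
    have haeb : ∀ᵐ t ∂(MeasureTheory.volume.restrict (Set.uIoc (0:ℝ) 1)),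
        ‖⟪Δ', fderiv ℝ (gradient F) (line t) Δ⟫ - ⟪Δ', T Δ⟫‖
          ≤ (L * ‖Δ‖ * ‖Δ‖ * ‖Δ'‖) * (1 - t) := by
      refine (MeasureTheory.ae_restrict_iff' measurableSet_uIoc).2
        (Filter.Eventually.of_forall fun s hs => ?_)
      rw [Set.uIoc_of_le zero_le_one] at hs
      exact hb s ⟨hs.1.le, hs.2⟩
    have hle := intervalIntegral.norm_integral_le_of_norm_le zero_le_one
      (((MeasureTheory.ae_restrict_iff' measurableSet_uIoc).1 haeb).mono
        fun t ht hm => ht (by rwa [Set.uIoc_of_le zero_le_one])) hbint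
    have hC : 0 ≤ L * ‖Δ‖ * ‖Δ‖ * ‖Δ'‖ := by
      have h := hb (1/2) (by norm_num)
      have h0 := norm_nonneg (⟪Δ', fderiv ℝ (gradient F) (line (1/2)) Δ⟫ - ⟪Δ', T Δ⟫)
      nlinarith
    have h12 : ∫ s in (0:ℝ)..1, (1 - s) = 1 / 2 := by
      rw [intervalIntegral.integral_sub intervalIntegrable_const
        intervalIntegral.intervalIntegrable_id]
      simp [integral_id]
      norm_num
    rw [Real.norm_eq_abs] at hle
    refine hle.trans ?_
    rw [intervalIntegral.integral_const_mul, h12]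
    exact le_of_eq (by ring)
  -- final algebra
  have hX : -(2 * (⟪Δ', g⟫ - ⟪Δ', T Δ⟫)) ≤ L * ‖Δ‖ ^ 2 * ‖Δ'‖ := by
    have h := (abs_le.1 hbound).1
    linarith
  have hid : ⟪Δ', T Δ'⟫ = (⟪ptil, T ptil⟫ - 2 * ⟪ptil, g⟫) - (⟪Δ, T Δ⟫ - 2 * ⟪Δ, g⟫)
      - 2 * (⟪Δ', g⟫ - ⟪Δ', T Δ⟫) := by
    have e2 : (⟪Δ, T ptil⟫ : ℝ) = ⟪ptil, T Δ⟫ := by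
      rw [← hsym]; exact real_inner_comm _ _
    rw [hΔ']
    simp only [map_sub, inner_sub_left, inner_sub_right]
    rw [e2]; ring
  have hp := hptil ((1 - α ^ 2)⁻¹ • Δ)
  simp only [_root_.map_smul, real_inner_smul_left, real_inner_smul_right] at hp
  have hrhs : (1 - α ^ 2) * ((1 - α ^ 2)⁻¹ * ((1 - α ^ 2)⁻¹ * ⟪Δ, T Δ⟫)
      - 2 * ((1 - α ^ 2)⁻¹ * ⟪Δ, g⟫))
      = (1 - α ^ 2)⁻¹ * ⟪Δ, T Δ⟫ - 2 * ⟪Δ, g⟫ := by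
    have hinv : (1 - α ^ 2) * (1 - α ^ 2)⁻¹ = 1 := mul_inv_cancel₀ hα2.ne'
    linear_combination ((1 - α ^ 2)⁻¹ * ⟪Δ, T Δ⟫ - 2 * ⟪Δ, g⟫) * hinv
  have hcoef : α ^ 2 / (1 - α ^ 2) * ⟪Δ, T Δ⟫
      = (1 - α ^ 2)⁻¹ * ⟪Δ, T Δ⟫ - ⟪Δ, T Δ⟫ := by
    have hinv : (1 - α ^ 2) * (1 - α ^ 2)⁻¹ = 1 := mul_inv_cancel₀ hα2.ne'
    linear_combination (-⟪Δ, T Δ⟫) * hinv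
  rw [hrhs] at hp
  rw [hid]
  linarith [hp, hX, hcoef]
end
end
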